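/- arXiv:1808.05736 — 11 statements merged into one kernel-verified Lean document; each statement's English description precedes it below -/
import Mathlib

section
/- For all integers n ≥ k ≥ 0, the entry N_{n,k}(z) = ∑_{i=0}^{n-k} ((k+1)/(n+1)) C(n+1,i) C(n+1,i+k+1) z^i satisfies the recurrence N_{n,k}(z) = N_{n-1,k-1}(z) + (z+1) N_{n-1,k}(z) + z N_{n-1,k+1}(z) for n,k ≥ 1, together with N_{0,0}(z)=1, N_{n,0}(z) = (z+1) N_{n-1,0}(z) + z N_{n-1,1}(z) for n ≥ 1, and N_{n,k}(z)=0 for k > n. -/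
open Polynomial Finset

/-- The generalized Narayana triangle entry, defined by the explicit
double-binomial sum `N_{n,k}(z) = ∑_{i=0}^{n-k} ((k+1)/(n+1)) C(n+1,i) C(n+1,i+k+1) z^i`. -/
noncomputable def Nray (n k : ℕ) : Polynomial ℚ :=
  ∑ i ∈ Finset.range (n - k + 1),
    Polynomial.C (((k : ℚ) + 1) / ((n : ℚ) + 1) * ((n + 1).choose i) * ((n + 1).choose (i + k + 1)))
      * Polynomial.X ^ i

/-- Determinant form of the Narayana coefficient. -/
def Bc (n k i : ℕ) : ℚ :=
  (n.choose i) * (n.choose (i + k))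
    - if i = 0 then 0 else (n.choose (i - 1)) * (n.choose (i + k + 1))

lemma castA (n m : ℕ) :
    ((n : ℚ) + 1) * (n.choose m) = ((m : ℚ) + 1) * ((n + 1).choose (m + 1)) := by
  have h := Nat.add_one_mul_choose_eq n m
  have h2 : ((Nat.succ n * n.choose m : ℕ) : ℚ) = (((n + 1).choose (m + 1) * (m + 1) : ℕ) : ℚ) :=
    by exact_mod_cast congrArg (Nat.cast : ℕ → ℚ) h
  push_cast at h2
  linarith

lemma castP (n m : ℕ) :
    (((n + 1).choose (m + 1) : ℕ) : ℚ) = (n.choose m : ℚ) + (n.choose (m + 1) : ℚ) := by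
  rw [Nat.choose_succ_succ]
  push_cast
  ring

/-- Pascal with flexible second index. -/
lemma castP' (n a b : ℕ) (h : b = a + 1) :
    (((n + 1).choose b : ℕ) : ℚ) = (n.choose a : ℚ) + (n.choose b : ℚ) := by
  subst h; exact castP n a

lemma Bc_zero (n k : ℕ) : Bc n k 0 = n.choose k := by
  simp [Bc]

lemma Bc_succ (n k j : ℕ) :
    Bc n k (j + 1)
      = (n.choose (j + 1) : ℚ) * (n.choose (j + k + 1) : ℚ)
        - (n.choose j : ℚ) * (n.choose (j + k + 2) : ℚ) := by
  simp only [Bc, if_neg (Nat.succ_ne_zero j), Nat.succ_sub_one]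
  rw [show j + 1 + k = j + k + 1 from by omega]
  rw [show j + k + 1 + 1 = j + k + 2 from by omega]
  push_cast
  ring

lemma akey (n k i : ℕ) :
    ((k : ℚ) + 1) / ((n : ℚ) + 1) * ((n + 1).choose i) * ((n + 1).choose (i + k + 1))
      = Bc n k i := by
  have hn : ((n : ℚ) + 1) ≠ 0 := by positivity
  rw [div_mul_eq_mul_div, div_mul_eq_mul_div, div_eq_iff hn]
  cases i with
  | zero =>
      have h := castA n k
      rw [Bc_zero]
      simp only [Nat.choose_zero_right, Nat.cast_one, Nat.zero_add, zero_add, mul_one, one_mul]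
      linarith
  | succ j =>
      have ha := castA n j
      have hc := castA n (j + k + 1)
      have p1 := castP n j
      have p2 := castP' n (j + k + 1) (j + k + 2) (by omega)
      rw [show j + k + 1 + 1 = j + k + 2 from by omega] at hc
      rw [Bc_succ]
      rw [show j + 1 + k + 1 = j + k + 2 from by omega]
      rw [p1] at ha ⊢
      rw [p2] at hc ⊢
      push_cast at ha hc ⊢
      linear_combination ((n.choose (j + k + 1) : ℚ) + (n.choose (j + k + 2) : ℚ)) * ha
        - ((n.choose j : ℚ) + (n.choose (j + 1) : ℚ)) * hc

lemma coeff_Nray (n k m : ℕ) :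
    (Nray n k).coeff m
      = ((k : ℚ) + 1) / ((n : ℚ) + 1) * ((n + 1).choose m) * ((n + 1).choose (m + k + 1)) := by
  unfold Nray
  rw [Polynomial.finset_sum_coeff]
  simp only [Polynomial.coeff_C_mul, Polynomial.coeff_X_pow, mul_ite, mul_one, mul_zero]
  rw [Finset.sum_ite_eq (Finset.range (n - k + 1)) m]
  by_cases hm : m ∈ Finset.range (n - k + 1)
  · rw [if_pos hm]
  · rw [if_neg hm]
    have : (n + 1).choose (m + k + 1) = 0 := by
      apply Nat.choose_eq_zero_of_lt
      simp only [Finset.mem_range] at hm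
      omega
    rw [this]
    push_cast
    ring

lemma coeff_Nray_Bc (n k m : ℕ) : (Nray n k).coeff m = Bc n k m := by
  rw [coeff_Nray, akey]

lemma Bc_rec0 (n j : ℕ) :
    Bc (n + 1) 0 (j + 1) = Bc n 0 (j + 1) + Bc n 0 j + Bc n 1 j := by
  cases j with
  | zero =>
      rw [Bc_succ, Bc_succ, Bc_zero, Bc_zero]
      norm_num
      rw [castP' n 1 2 (by norm_num)]
      simp only [Nat.choose_one_right]
      ring
  | succ i =>
      rw [Bc_succ, Bc_succ, Bc_succ, Bc_succ]
      rw [show i + 1 + 0 + 1 = i + 2 from by omega, show i + 1 + 0 + 2 = i + 3 from by omega,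
        show i + 0 + 1 = i + 1 from by omega, show i + 0 + 2 = i + 2 from by omega,
        show i + 1 + 1 = i + 2 from by omega, show i + 1 + 2 = i + 3 from by omega]
      rw [castP' n (i + 1) (i + 2) (by omega), castP n i, castP' n (i + 2) (i + 3) (by omega)]
      ring

lemma Bc_rec (n k j : ℕ) :
    Bc (n + 1) (k + 1) (j + 1)
      = Bc n k (j + 1) + Bc n (k + 1) (j + 1) + Bc n (k + 1) j + Bc n (k + 2) j := by
  cases j with
  | zero =>
      rw [Bc_succ, Bc_succ, Bc_succ, Bc_zero, Bc_zero]
      rw [show 0 + (k + 1) + 1 = k + 2 from by omega, show 0 + (k + 1) + 2 = k + 3 from by omega,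
        show 0 + k + 1 = k + 1 from by omega, show 0 + k + 2 = k + 2 from by omega,
        show 0 + 1 = 1 from by norm_num]
      rw [castP' n 0 1 (by norm_num), castP' n (k + 1) (k + 2) (by omega),
        castP' n (k + 2) (k + 3) (by omega)]
      simp only [Nat.choose_zero_right, Nat.cast_one]
      ring
  | succ i =>
      rw [Bc_succ, Bc_succ, Bc_succ, Bc_succ, Bc_succ]
      rw [show i + 1 + (k + 1) + 1 = i + k + 3 from by omega,
        show i + 1 + (k + 1) + 2 = i + k + 4 from by omega,
        show i + 1 + k + 1 = i + k + 2 from by omega,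
        show i + 1 + k + 2 = i + k + 3 from by omega,
        show i + (k + 1) + 1 = i + k + 2 from by omega,
        show i + (k + 1) + 2 = i + k + 3 from by omega,
        show i + (k + 2) + 1 = i + k + 3 from by omega,
        show i + (k + 2) + 2 = i + k + 4 from by omega,
        show i + 1 + 1 = i + 2 from by omega]
      rw [castP' n (i + 1) (i + 2) (by omega), castP n i,
        castP' n (i + k + 2) (i + k + 3) (by omega), castP' n (i + k + 3) (i + k + 4) (by omega)]
      ring

theorem stmt0 :
    Nray 0 0 = 1 ∧
    (∀ n : ℕ, Nray (n + 1) 0 = (Polynomial.X + 1) * Nray n 0 + Polynomial.X * Nray n 1) ∧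
    (∀ n k : ℕ, Nray (n + 1) (k + 1)
        = Nray n k + (Polynomial.X + 1) * Nray n (k + 1) + Polynomial.X * Nray n (k + 2)) ∧
    (∀ n k : ℕ, n < k → Nray n k = 0) := by
  refine ⟨?_, ?_, ?_, ?_⟩
  · unfold Nray
    norm_num
  · intro n
    ext m
    cases m with
    | zero =>
        simp only [Polynomial.coeff_add, Polynomial.mul_coeff_zero, Polynomial.coeff_X_zero,
          Polynomial.coeff_one_zero, zero_mul, zero_add, add_zero, one_mul, coeff_Nray_Bc,
          Bc_zero]
        simp
    | succ j =>
        rw [Polynomial.coeff_add, add_mul, one_mul, Polynomial.coeff_add,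
          Polynomial.coeff_X_mul, Polynomial.coeff_X_mul]
        simp only [coeff_Nray_Bc]
        rw [Bc_rec0]
        ring
  · intro n k
    ext m
    cases m with
    | zero =>
        simp only [Polynomial.coeff_add, Polynomial.mul_coeff_zero, Polynomial.coeff_X_zero,
          Polynomial.coeff_one_zero, zero_mul, zero_add, add_zero, one_mul, coeff_Nray_Bc,
          Bc_zero]
        rw [castP n k]
    | succ j =>
        rw [Polynomial.coeff_add, Polynomial.coeff_add, add_mul, one_mul, Polynomial.coeff_add,
          Polynomial.coeff_X_mul, Polynomial.coeff_X_mul]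
        simp only [coeff_Nray_Bc]
        rw [Bc_rec]
        ring
  · intro n k hk
    unfold Nray
    have h1 : n - k = 0 := by omega
    rw [h1]
    simp only [zero_add, Finset.range_one, Finset.sum_singleton]
    rw [show (n + 1).choose (k + 1) = 0 from Nat.choose_eq_zero_of_lt (by omega)]
    push_cast
    simp
end

section
/- Let (A_{n,k}) be the recursive matrix with A_{0,0}=1, A_{0,k}=0 for k>0, A_{n,0} = x A_{n-1,0} + z A_{n-1,1}, and A_{n,k} = A_{n-1,k-1} + y A_{n-1,k} + z A_{n-1,k+1} for n,k ≥ 1, and let (A*_{n,k}) denote the same array with x replaced by y. Then for all integers n, r ≥ 0 and m ≥ ℓ ≥ 0, with M_r = min{n+r+1, m+r-ℓ}: ∑_{k=0}^{M_r} z^k (A_{n,k} A_{m+r+1,k+ℓ+1} − A_{m,k+ℓ+1} A_{n+r+1,k}) = ∑_{i=0}^{r} A_{n+i,0} A*_{m+r-i,ℓ}. -/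
open Finset

/-- Theorem 1.3 (main theorem 1): weighted sums of 2×2 minors of the recursive matrix
for `σ = (x,y,y,…)`, `τ = (z,z,z,…)`. -/
theorem stmt4 {R : Type*} [CommRing R] (x y z : R)
    (A Astar : ℕ → ℕ → R)
    (hA00 : A 0 0 = 1) (hAtop : ∀ n k, n < k → A n k = 0)
    (hA0 : ∀ n, A (n + 1) 0 = x * A n 0 + z * A n 1)
    (hA : ∀ n k, A (n + 1) (k + 1) = A n k + y * A n (k + 1) + z * A n (k + 2))
    (hS00 : Astar 0 0 = 1) (hStop : ∀ n k, n < k → Astar n k = 0)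
    (hS0 : ∀ n, Astar (n + 1) 0 = y * Astar n 0 + z * Astar n 1)
    (hS : ∀ n k, Astar (n + 1) (k + 1) = Astar n k + y * Astar n (k + 1) + z * Astar n (k + 2))
    (n r m ℓ : ℕ) (hml : ℓ ≤ m) :
    ∑ k ∈ Finset.range (min (n + r + 1) (m + r - ℓ) + 1),
        z ^ k * (A n k * A (m + r + 1) (k + ℓ + 1) - A m (k + ℓ + 1) * A (n + r + 1) k)
      = ∑ i ∈ Finset.range (r + 1), A (n + i) 0 * Astar (m + r - i) ℓ := by
  -- Step 1: Astar in terms of A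
  have hBstar : ∀ N L, Astar N L = A N L - (x - y) * A N (L + 1) := by
    intro N
    induction N with
    | zero =>
      intro L
      match L with
      | 0 => rw [hS00, hA00, hAtop 0 1 (by omega)]; ring
      | (l+1) =>
        rw [hStop 0 (l+1) (by omega), hAtop 0 (l+1) (by omega),
          hAtop 0 (l+1+1) (by omega)]; ring
    | succ N ih =>
      intro L
      match L with
      | 0 => rw [hS0, hA0, hA N 0, ih 0, ih 1]; ring
      | (l+1) => rw [hS N l, hA N l, hA N (l+1), ih l, ih (l+1), ih (l+2)]; ring
  -- Step 2: extension of sums whose tail vanishes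
  have ext : ∀ (f : ℕ → R) (c B : ℕ), c ≤ B → (∀ k, c ≤ k → f k = 0) →
      ∑ k ∈ range c, f k = ∑ k ∈ range B, f k := by
    intro f c B h h0
    refine Finset.sum_subset (range_subset_range.2 h) (fun k _ hk' => h0 k ?_)
    simpa using hk'
  -- Step 3: key telescoping lemma
  have key : ∀ (a N L b : ℕ),
      ∑ k ∈ range (a + 2 + b),
        z ^ k * (A a k * A (N + 1) (k + L + 1) - A N (k + L + 1) * A (a + 1) k)
        = A a 0 * Astar N L := by
    intro a N L b
    rw [show a + 2 + b = (a + 1 + b) + 1 from by omega, Finset.sum_range_succ']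
    have hc : ∀ i ∈ range (a + 1 + b),
        z ^ (i+1) * (A a (i+1) * A (N + 1) (i+1 + L + 1) - A N (i+1 + L + 1) * A (a + 1) (i+1))
        = (fun j => z ^ (j+1) * (A a (j+1) * A N (j + L + 1) - A a j * A N (j + L + 2))) i
          - (fun j => z ^ (j+1) * (A a (j+1) * A N (j + L + 1) - A a j * A N (j + L + 2))) (i+1) := by
      intro i _
      simp only
      rw [show i+1+L+1 = i+L+1+1 from by omega, hA N (i+L+1), hA a i,
        show i+L+1+1 = i+L+2 from by omega, show i+L+1+2 = i+L+3 from by omega,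
        show i+1+L+2 = i+L+3 from by omega]
      ring
    rw [Finset.sum_congr rfl hc, Finset.sum_range_sub']
    rw [hAtop a (a+1+b+1) (by omega), hAtop a (a+1+b) (by omega)]
    simp only [Nat.zero_add, pow_zero]
    rw [hA N L, hA0 a, hBstar N L]
    ring
  -- Step 4: induction on r
  induction r generalizing n with
  | zero =>
    simp only [Nat.add_zero]
    rw [Finset.sum_range_one, Nat.add_zero, Nat.sub_zero]
    have E : ∑ k ∈ range (min (n+1) (m-ℓ) + 1),
        z ^ k * (A n k * A (m+1) (k+ℓ+1) - A m (k+ℓ+1) * A (n+1) k)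
        = ∑ k ∈ range (n+2),
        z ^ k * (A n k * A (m+1) (k+ℓ+1) - A m (k+ℓ+1) * A (n+1) k) := by
      apply ext _ _ _ (by omega)
      intro k hk
      rcases le_or_gt k (n+1) with h1 | h1
      · rw [hAtop (m+1) (k+ℓ+1) (by omega), hAtop m (k+ℓ+1) (by omega)]; ring
      · rw [hAtop n k (by omega), hAtop (n+1) k (by omega)]; ring
    rw [E]
    have := key n m ℓ 0
    rwa [Nat.add_zero] at this
  | succ r ih =>
    have ihn := ih (n+1)
    rw [show n+1+r+1 = n+r+2 from by omega] at ihn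
    rw [show n+(r+1)+1 = n+r+2 from by omega, show m+(r+1)+1 = m+r+2 from by omega,
        show m+(r+1) = m+r+1 from by omega]
    have E3 := key n (m+r+1) ℓ (r+1)
    rw [show n+2+(r+1) = n+r+3 from by omega, show m+r+1+1 = m+r+2 from by omega] at E3
    have E1 : ∑ k ∈ range (min (n+r+2) (m+r+1-ℓ) + 1),
        z ^ k * (A n k * A (m+r+2) (k+ℓ+1) - A m (k+ℓ+1) * A (n+r+2) k)
        = ∑ k ∈ range (n+r+3),
        z ^ k * (A n k * A (m+r+2) (k+ℓ+1) - A m (k+ℓ+1) * A (n+r+2) k) := by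
      apply ext _ _ _ (by omega)
      intro k hk
      rcases le_or_gt k (n+r+2) with h1 | h1
      · rw [hAtop (m+r+2) (k+ℓ+1) (by omega), hAtop m (k+ℓ+1) (by omega)]; ring
      · rw [hAtop n k (by omega), hAtop (n+r+2) k (by omega)]; ring
    have E2 : ∑ k ∈ range (min (n+r+2) (m+r-ℓ) + 1),
        z ^ k * (A (n+1) k * A (m+r+1) (k+ℓ+1) - A m (k+ℓ+1) * A (n+r+2) k)
        = ∑ k ∈ range (n+r+3),
        z ^ k * (A (n+1) k * A (m+r+1) (k+ℓ+1) - A m (k+ℓ+1) * A (n+r+2) k) := by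
      apply ext _ _ _ (by omega)
      intro k hk
      rcases le_or_gt k (n+r+2) with h1 | h1
      · rw [hAtop (m+r+1) (k+ℓ+1) (by omega), hAtop m (k+ℓ+1) (by omega)]; ring
      · rw [hAtop (n+1) k (by omega), hAtop (n+r+2) k (by omega)]; ring
    rw [E2] at ihn
    rw [E1]
    have split : ∑ k ∈ range (n+r+3),
        z ^ k * (A n k * A (m+r+2) (k+ℓ+1) - A m (k+ℓ+1) * A (n+r+2) k)
      = (∑ k ∈ range (n+r+3),
          z ^ k * (A (n+1) k * A (m+r+1) (k+ℓ+1) - A m (k+ℓ+1) * A (n+r+2) k))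
        + ∑ k ∈ range (n+r+3),
          z ^ k * (A n k * A (m+r+2) (k+ℓ+1) - A (m+r+1) (k+ℓ+1) * A (n+1) k) := by
      rw [← Finset.sum_add_distrib]
      exact Finset.sum_congr rfl (fun k _ => by ring)
    rw [split, ihn, E3]
    conv_rhs => rw [Finset.sum_range_succ']
    congr 1
    · apply Finset.sum_congr rfl
      intro i _
      rw [show n+(i+1) = n+1+i from by omega, show m+r+1-(i+1) = m+r-i from by omega]
end

section
/- Let (A_{n,k}) be the recursive matrix with A_{0,0}=1, A_{n,k} = A_{n-1,k-1} + y A_{n-1,k} + z A_{n-1,k+1} for n ≥ 1 (with A_{n,k}=0 for k<0 or k>n). Then for all integers m ≥ n ≥ 0 and all integers r with n + r ≥ 0: ∑_{k=0}^{m} z^k (A_{n,k} A_{m+r,k+1} + A_{n+r,k+1} A_{m,k}) = A_{m+n+r,1} + H_{n,m}(r), where H_{n,m}(r) = ∑_{i=0}^{r-1} A_{n+i,0} A_{m+r-i-1,0} if r ≥ 1, H_{n,m}(0) = 0, and H_{n,m}(r) = −∑_{i=1}^{|r|} A_{n-i,0} A_{m-|r|+i-1,0} if r ≤ −1. -/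
open Finset

section Aux

variable {R : Type*} [CommRing R] (y z : R) (A : ℕ → ℕ → R)

private lemma aux_sum_range_split (f : ℕ → R) (a b : ℕ) :
    ∑ j ∈ range (a + b), f j = (∑ j ∈ range a, f j) + ∑ j ∈ range b, f (a + j) := by
  induction b with
  | zero => simp
  | succ b ih =>
      rw [show a + (b + 1) = (a + b) + 1 from rfl, Finset.sum_range_succ,
        Finset.sum_range_succ, ih, add_assoc]

private lemma aux_split2 (f : ℕ → R) (a b S : ℕ) (h : S = a + b) :
    ∑ j ∈ range S, f j = (∑ j ∈ range a, f j) + ∑ j ∈ range b, f (a + j) := by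
  subst h; exact aux_sum_range_split f a b

private lemma aux_split3 (f : ℕ → R) (a b c S : ℕ) (h : S = a + b + c) :
    ∑ j ∈ range S, f j
      = (∑ j ∈ range a, f j) + (∑ i ∈ range b, f (a + i)) + ∑ j ∈ range c, f (a + b + j) := by
  subst h
  rw [aux_sum_range_split f (a + b) c, aux_sum_range_split f a b]

/-- The basic exchange step: `B(n+1, p) = B(n, p+1) - A n 0 * A p 0`
(sums truncated at `n + 2`). -/
private lemma aux_step
    (hAtop : ∀ n k, n < k → A n k = 0)
    (hA0 : ∀ n, A (n + 1) 0 = y * A n 0 + z * A n 1)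
    (hA : ∀ n k, A (n + 1) (k + 1) = A n k + y * A n (k + 1) + z * A n (k + 2))
    (n p : ℕ) :
    ∑ k ∈ range (n + 2), z ^ k * (A (n + 1) k * A p (k + 1))
      = (∑ k ∈ range (n + 2), z ^ k * (A n k * A (p + 1) (k + 1))) - A n 0 * A p 0 := by
  -- elementary sums
  have hL : ∑ k ∈ range (n + 2), z ^ k * (A (n + 1) k * A p (k + 1))
      = (∑ k ∈ range (n + 1),
          (z * (z ^ k * (A n k * A p (k + 2)))
            + y * (z ^ (k + 1) * (A n (k + 1) * A p (k + 2)))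
            + z ^ (k + 2) * (A n (k + 2) * A p (k + 2))))
        + (y * (A n 0 * A p 1) + z * (A n 1 * A p 1)) := by
    rw [Finset.sum_range_succ' (fun k => z ^ k * (A (n + 1) k * A p (k + 1))) (n + 1)]
    congr 1
    · refine Finset.sum_congr rfl fun k _ => ?_
      rw [hA n k]; ring
    · rw [hA0 n]; ring
  have hR : ∑ k ∈ range (n + 2), z ^ k * (A n k * A (p + 1) (k + 1))
      = ∑ k ∈ range (n + 2),
          (z ^ k * (A n k * A p k) + y * (z ^ k * (A n k * A p (k + 1)))
            + z * (z ^ k * (A n k * A p (k + 2)))) := by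
    refine Finset.sum_congr rfl fun k _ => ?_
    rw [hA p k]; ring
  rw [hL, hR]
  rw [Finset.sum_add_distrib, Finset.sum_add_distrib, Finset.sum_add_distrib,
    Finset.sum_add_distrib, ← Finset.mul_sum, ← Finset.mul_sum, ← Finset.mul_sum,
    ← Finset.mul_sum]
  -- e-sums
  have he : ∑ k ∈ range (n + 2), z ^ k * (A n k * A p (k + 2))
      = ∑ k ∈ range (n + 1), z ^ k * (A n k * A p (k + 2)) := by
    rw [Finset.sum_range_succ, hAtop n (n + 1) (by omega)]; ring
  -- g-sums
  have hg : ∑ k ∈ range (n + 2), z ^ k * (A n k * A p (k + 1))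
      = (∑ k ∈ range (n + 1), z ^ (k + 1) * (A n (k + 1) * A p (k + 2)))
        + A n 0 * A p 1 := by
    rw [Finset.sum_range_succ' (fun k => z ^ k * (A n k * A p (k + 1))) (n + 1)]
    simp
  -- h-sums
  have hh : ∑ k ∈ range (n + 2), z ^ k * (A n k * A p k)
      = (∑ k ∈ range (n + 1), z ^ (k + 2) * (A n (k + 2) * A p (k + 2)))
        + z * (A n 1 * A p 1) + A n 0 * A p 0 := by
    have h3 : ∑ k ∈ range (n + 3), z ^ k * (A n k * A p k)
        = ∑ k ∈ range (n + 2), z ^ k * (A n k * A p k) := by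
      rw [Finset.sum_range_succ, hAtop n (n + 2) (by omega)]; ring
    have h4 : ∑ k ∈ range (n + 3), z ^ k * (A n k * A p k)
        = (∑ k ∈ range (n + 2), z ^ (k + 1) * (A n (k + 1) * A p (k + 1)))
          + A n 0 * A p 0 := by
      rw [Finset.sum_range_succ' (fun k => z ^ k * (A n k * A p k)) (n + 2)]
      simp
    have h5 : ∑ k ∈ range (n + 2), z ^ (k + 1) * (A n (k + 1) * A p (k + 1))
        = (∑ k ∈ range (n + 1), z ^ (k + 2) * (A n (k + 2) * A p (k + 2)))
          + z ^ 1 * (A n 1 * A p 1) := by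
      rw [Finset.sum_range_succ' (fun k => z ^ (k + 1) * (A n (k + 1) * A p (k + 1))) (n + 1)]
    rw [← h3, h4, h5]; ring
  rw [he, hg, hh]
  ring

/-- Lemma A: `B(n, p) = A(n+p, 1) - ∑_{j<n} A j 0 * A (n-1-j+p) 0`. -/
private lemma aux_lemA
    (hA00 : A 0 0 = 1)
    (hAtop : ∀ n k, n < k → A n k = 0)
    (hA0 : ∀ n, A (n + 1) 0 = y * A n 0 + z * A n 1)
    (hA : ∀ n k, A (n + 1) (k + 1) = A n k + y * A n (k + 1) + z * A n (k + 2)) :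
    ∀ n p : ℕ, ∑ k ∈ range (n + 1), z ^ k * (A n k * A p (k + 1))
      = A (n + p) 1 - ∑ j ∈ range n, A j 0 * A (n - 1 - j + p) 0 := by
  intro n
  induction n with
  | zero => intro p; simp [hA00]
  | succ n ih =>
      intro p
      rw [aux_step y z A hAtop hA0 hA n p]
      have htr : ∑ k ∈ range (n + 2), z ^ k * (A n k * A (p + 1) (k + 1))
          = ∑ k ∈ range (n + 1), z ^ k * (A n k * A (p + 1) (k + 1)) := by
        rw [Finset.sum_range_succ, hAtop n (n + 1) (by omega)]; ring
      rw [htr, ih (p + 1)]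
      rw [Finset.sum_range_succ (fun j => A j 0 * A (n + 1 - 1 - j + p) 0) n]
      have h1 : n + 1 + p = n + (p + 1) := by omega
      have h2 : ∀ j ∈ range n, A j 0 * A (n - 1 - j + (p + 1)) 0
          = A j 0 * A (n + 1 - 1 - j + p) 0 := by
        intro j hj
        have : n - 1 - j + (p + 1) = n + 1 - 1 - j + p := by
          have := Finset.mem_range.1 hj; omega
        rw [this]
      rw [Finset.sum_congr rfl h2] at *
      have h3 : n + 1 - 1 - n + p = p := by omega
      rw [h1, h3]
      ring

/-- Lemma C: `A s 1 = ∑_{j<s} A j 0 * A (s-1-j) 0`. -/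
private lemma aux_lemC
    (hA00 : A 0 0 = 1)
    (hAtop : ∀ n k, n < k → A n k = 0)
    (hA0 : ∀ n, A (n + 1) 0 = y * A n 0 + z * A n 1)
    (hA : ∀ n k, A (n + 1) (k + 1) = A n k + y * A n (k + 1) + z * A n (k + 2)) (s : ℕ) :
    A s 1 = ∑ j ∈ range s, A j 0 * A (s - 1 - j) 0 := by
  have := aux_lemA y z A hA00 hAtop hA0 hA s 0
  have hz : ∑ k ∈ range (s + 1), z ^ k * (A s k * A 0 (k + 1)) = 0 := by
    refine Finset.sum_eq_zero fun k _ => ?_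
    rw [hAtop 0 (k + 1) (by omega)]; ring
  rw [hz] at this
  have h2 : ∀ j ∈ range s, A j 0 * A (s - 1 - j + 0) 0 = A j 0 * A (s - 1 - j) 0 := by
    intro j _; rw [Nat.add_zero]
  rw [Finset.sum_congr rfl h2] at this
  rw [show s + 0 = s from rfl] at this
  linear_combination -this

/-- Reflection helper. -/
private lemma aux_reflect (a m S : ℕ) (hS : a + m = S) :
    ∑ j ∈ range m, A (a + j) 0 * A (S - 1 - (a + j)) 0
      = ∑ j ∈ range m, A j 0 * A (S - 1 - j) 0 := by
  rw [← Finset.sum_range_reflect (fun j => A (a + j) 0 * A (S - 1 - (a + j)) 0) m]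
  refine Finset.sum_congr rfl fun j hj => ?_
  have hj' := Finset.mem_range.1 hj
  have e1 : a + (m - 1 - j) = S - 1 - j := by omega
  have e2 : S - 1 - (a + (m - 1 - j)) = j := by omega
  rw [e2, e1, mul_comm]

end Aux

/-- Theorem 1.4 (main theorem 2): weighted sums of 2×2 permanents of the recursive matrix
for `σ = (y,y,y,…)`, `τ = (z,z,z,…)`. -/
theorem stmt5 {R : Type*} [CommRing R] (y z : R)
    (A : ℕ → ℕ → R)
    (hA00 : A 0 0 = 1) (hAtop : ∀ n k, n < k → A n k = 0)
    (hA0 : ∀ n, A (n + 1) 0 = y * A n 0 + z * A n 1)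
    (hA : ∀ n k, A (n + 1) (k + 1) = A n k + y * A n (k + 1) + z * A n (k + 2))
    (n m : ℕ) (r : ℤ) (hnm : n ≤ m) (hr : 0 ≤ (n : ℤ) + r) :
    ∑ k ∈ Finset.range (m + 1),
        z ^ k * (A n k * A ((m : ℤ) + r).toNat (k + 1) + A ((n : ℤ) + r).toNat (k + 1) * A m k)
      = A ((m : ℤ) + (n : ℤ) + r).toNat 1 +
        (if 0 ≤ r then
            ∑ i ∈ Finset.range r.toNat, A (n + i) 0 * A (m + r.toNat - i - 1) 0
         else
            - ∑ i ∈ Finset.range r.natAbs, A (n - (i + 1)) 0 * A (m - r.natAbs + i) 0) := by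
  set b : ℕ := ((m : ℤ) + r).toNat with hb
  set c : ℕ := ((n : ℤ) + r).toNat with hc
  set S : ℕ := ((m : ℤ) + (n : ℤ) + r).toNat with hSdef
  have hbS : n + b = S := by omega
  have hcS : m + c = S := by omega
  -- split the sum
  have hsplit : ∑ k ∈ Finset.range (m + 1),
        z ^ k * (A n k * A b (k + 1) + A c (k + 1) * A m k)
      = (∑ k ∈ Finset.range (m + 1), z ^ k * (A n k * A b (k + 1)))
        + ∑ k ∈ Finset.range (m + 1), z ^ k * (A m k * A c (k + 1)) := by
    rw [← Finset.sum_add_distrib]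
    refine Finset.sum_congr rfl fun k _ => ?_
    ring
  rw [hsplit]
  -- truncate the first sum
  have htr : ∑ k ∈ Finset.range (m + 1), z ^ k * (A n k * A b (k + 1))
      = ∑ k ∈ Finset.range (n + 1), z ^ k * (A n k * A b (k + 1)) := by
    refine (Finset.sum_subset (Finset.range_subset_range.2 (by omega)) fun k _ hk => ?_).symm
    rw [hAtop n k (by have := Finset.mem_range.not.1 hk; omega)]
    ring
  rw [htr, aux_lemA y z A hA00 hAtop hA0 hA n b, aux_lemA y z A hA00 hAtop hA0 hA m c]
  -- rewrite indices to S
  have hg1 : ∀ j ∈ range n, A j 0 * A (n - 1 - j + b) 0 = A j 0 * A (S - 1 - j) 0 := by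
    intro j hj
    have := Finset.mem_range.1 hj
    have : n - 1 - j + b = S - 1 - j := by omega
    rw [this]
  have hg2 : ∀ j ∈ range m, A j 0 * A (m - 1 - j + c) 0 = A j 0 * A (S - 1 - j) 0 := by
    intro j hj
    have := Finset.mem_range.1 hj
    have : m - 1 - j + c = S - 1 - j := by omega
    rw [this]
  rw [Finset.sum_congr rfl hg1, Finset.sum_congr rfl hg2, hbS, hcS]
  have hC := aux_lemC y z A hA00 hAtop hA0 hA S
  by_cases hrpos : 0 ≤ r
  · rw [if_pos hrpos]
    set t : ℕ := r.toNat with ht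
    have hsum : ∑ j ∈ range S, A j 0 * A (S - 1 - j) 0
        = (∑ j ∈ range n, A j 0 * A (S - 1 - j) 0)
          + (∑ i ∈ range t, A (n + i) 0 * A (S - 1 - (n + i)) 0)
          + ∑ j ∈ range m, A (n + t + j) 0 * A (S - 1 - (n + t + j)) 0 :=
      aux_split3 (fun j => A j 0 * A (S - 1 - j) 0) n t m S (by omega)
    rw [aux_reflect A (n + t) m S (by omega)] at hsum
    have hmid : ∑ i ∈ range t, A (n + i) 0 * A (S - 1 - (n + i)) 0
        = ∑ i ∈ range t, A (n + i) 0 * A (m + t - i - 1) 0 := by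
      refine Finset.sum_congr rfl fun i hi => ?_
      have := Finset.mem_range.1 hi
      have : S - 1 - (n + i) = m + t - i - 1 := by omega
      rw [this]
    rw [hmid] at hsum
    linear_combination hC + hsum
  · rw [if_neg hrpos]
    set t : ℕ := r.natAbs with ht
    have htn : t ≤ n := by omega
    have hsn : ∑ j ∈ range n, A j 0 * A (S - 1 - j) 0
        = (∑ j ∈ range (n - t), A j 0 * A (S - 1 - j) 0)
          + ∑ i ∈ range t, A (n - t + i) 0 * A (S - 1 - (n - t + i)) 0 :=
      aux_split2 (fun j => A j 0 * A (S - 1 - j) 0) (n - t) t n (by omega)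
    have hmid : ∑ i ∈ range t, A (n - t + i) 0 * A (S - 1 - (n - t + i)) 0
        = ∑ i ∈ range t, A (n - (i + 1)) 0 * A (m - t + i) 0 := by
      rw [← Finset.sum_range_reflect
        (fun i => A ((n - t) + i) 0 * A (S - 1 - ((n - t) + i)) 0) t]
      refine Finset.sum_congr rfl fun i hi => ?_
      have := Finset.mem_range.1 hi
      have e2 : S - 1 - ((n - t) + (t - 1 - i)) = m - t + i := by omega
      have e1 : (n - t) + (t - 1 - i) = n - (i + 1) := by omega
      rw [e2, e1]
    rw [hmid] at hsn
    have hsS : ∑ j ∈ range S, A j 0 * A (S - 1 - j) 0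
        = (∑ j ∈ range (n - t), A j 0 * A (S - 1 - j) 0)
          + ∑ j ∈ range m, A (n - t + j) 0 * A (S - 1 - (n - t + j)) 0 :=
      aux_split2 (fun j => A j 0 * A (S - 1 - j) 0) (n - t) m S (by omega)
    rw [aux_reflect A (n - t) m S (by omega)] at hsS
    linear_combination hC + hsS - hsn
end

section
/- Let s_{n,k} be defined by s_{n,n}=1, s_{n,k}=0 for k>n or k<0, and s_{n,k} = s_{n-1,k-1} + 3 s_{n-1,k} + 2 s_{n-1,k+1}. Then for all integers n, m ≥ 0: ∑_{k=0}^{m} 2^k (s_{n,k} s_{m+1,k+1} − s_{m,k+1} s_{n+1,k}) = s_n · s_m, where s_n = s_{n,0} is the n-th little Schröder number. -/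
open Finset

/-- Corollary 2.2: weighted sums of 2×2 minors of the little Schröder triangle. -/
theorem stmt6 (s : ℕ → ℕ → ℤ)
    (h00 : s 0 0 = 1) (htop : ∀ n k, n < k → s n k = 0)
    (h0 : ∀ n, s (n + 1) 0 = 3 * s n 0 + 2 * s n 1)
    (h : ∀ n k, s (n + 1) (k + 1) = s n k + 3 * s n (k + 1) + 2 * s n (k + 2))
    (n m : ℕ) :
    ∑ k ∈ Finset.range (m + 1),
        2 ^ k * (s n k * s (m + 1) (k + 1) - s m (k + 1) * s (n + 1) k)
      = s n 0 * s m 0 := by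
  set N := n + m + 2 with hN
  -- extend the sum to range (N + 2); extra terms vanish
  have hext : (∑ k ∈ Finset.range (m + 1),
        2 ^ k * (s n k * s (m + 1) (k + 1) - s m (k + 1) * s (n + 1) k))
      = ∑ k ∈ Finset.range (N + 2),
        2 ^ k * (s n k * s (m + 1) (k + 1) - s m (k + 1) * s (n + 1) k) := by
    apply Finset.sum_subset (Finset.range_subset_range.2 (by omega))
    intro k _ hk'
    simp only [Finset.mem_range, not_lt] at hk'
    rw [htop (m + 1) (k + 1) (by omega), htop m (k + 1) (by omega)]
    ring
  rw [hext]
  have hsplit : (∑ k ∈ Finset.range (N + 2),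
        2 ^ k * (s n k * s (m + 1) (k + 1) - s m (k + 1) * s (n + 1) k))
      = (∑ k ∈ Finset.range (N + 2), 2 ^ k * (s n k * s (m + 1) (k + 1)))
      - (∑ k ∈ Finset.range (N + 2), 2 ^ k * (s m (k + 1) * s (n + 1) k)) := by
    rw [← Finset.sum_sub_distrib]
    exact Finset.sum_congr rfl fun k _ => by ring
  rw [hsplit]
  -- expansion of the first sum
  have hA : (∑ k ∈ Finset.range (N + 2), 2 ^ k * (s n k * s (m + 1) (k + 1)))
      = (∑ k ∈ Finset.range (N + 2), 2 ^ k * (s n k * s m k))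
      + 3 * (∑ k ∈ Finset.range (N + 2), 2 ^ k * (s n k * s m (k + 1)))
      + 2 * (∑ k ∈ Finset.range (N + 2), 2 ^ k * (s n k * s m (k + 2))) := by
    rw [Finset.mul_sum, Finset.mul_sum, ← Finset.sum_add_distrib, ← Finset.sum_add_distrib]
    exact Finset.sum_congr rfl fun k _ => by rw [h m k]; ring
  -- expansion of the second sum
  have hB : (∑ k ∈ Finset.range (N + 2), 2 ^ k * (s m (k + 1) * s (n + 1) k))
      = 2 * (∑ j ∈ Finset.range (N + 1), 2 ^ j * (s n j * s m (j + 2)))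
      + 3 * (∑ j ∈ Finset.range (N + 1), 2 ^ (j + 1) * (s n (j + 1) * s m (j + 2)))
      + (∑ j ∈ Finset.range (N + 1), 2 ^ (j + 2) * (s n (j + 2) * s m (j + 2)))
      + s m 1 * (3 * s n 0 + 2 * s n 1) := by
    rw [Finset.sum_range_succ' (fun k => 2 ^ k * (s m (k + 1) * s (n + 1) k)) (N + 1)]
    have step : (∑ j ∈ Finset.range (N + 1),
          2 ^ (j + 1) * (s m (j + 1 + 1) * s (n + 1) (j + 1)))
        = ∑ j ∈ Finset.range (N + 1),
          (2 * (2 ^ j * (s n j * s m (j + 2)))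
            + 3 * (2 ^ (j + 1) * (s n (j + 1) * s m (j + 2)))
            + 2 ^ (j + 2) * (s n (j + 2) * s m (j + 2))) := by
      apply Finset.sum_congr rfl
      intro j _
      have : j + 1 + 1 = j + 2 := by omega
      rw [this, h n j]; ring
    rw [step, Finset.sum_add_distrib, Finset.sum_add_distrib,
      ← Finset.mul_sum, ← Finset.mul_sum, h0 n]
    ring
  -- relate the shifted U-sum to the full one
  have hU : (∑ j ∈ Finset.range (N + 1), 2 ^ (j + 1) * (s n (j + 1) * s m (j + 2)))
      = (∑ k ∈ Finset.range (N + 2), 2 ^ k * (s n k * s m (k + 1))) - s n 0 * s m 1 := by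
    rw [Finset.sum_range_succ' (fun k => 2 ^ k * (s n k * s m (k + 1))) (N + 1)]
    have step : (∑ j ∈ Finset.range (N + 1), 2 ^ (j + 1) * (s n (j + 1) * s m (j + 1 + 1)))
        = ∑ j ∈ Finset.range (N + 1), 2 ^ (j + 1) * (s n (j + 1) * s m (j + 2)) := by
      apply Finset.sum_congr rfl
      intro j _
      have : j + 1 + 1 = j + 2 := by omega
      rw [this]
    rw [step]; ring
  -- relate the doubly shifted T-sum to the full one
  have hT : (∑ j ∈ Finset.range (N + 1), 2 ^ (j + 2) * (s n (j + 2) * s m (j + 2)))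
      = (∑ k ∈ Finset.range (N + 2), 2 ^ k * (s n k * s m k))
        - s n 0 * s m 0 - 2 * (s n 1 * s m 1) := by
    rw [Finset.sum_range_succ' (fun k => 2 ^ k * (s n k * s m k)) (N + 1),
      Finset.sum_range_succ' (fun j => 2 ^ (j + 1) * (s n (j + 1) * s m (j + 1))) N]
    have step : (∑ i ∈ Finset.range N, 2 ^ (i + 1 + 1) * (s n (i + 1 + 1) * s m (i + 1 + 1)))
        = ∑ i ∈ Finset.range N, 2 ^ (i + 2) * (s n (i + 2) * s m (i + 2)) := by
      apply Finset.sum_congr rfl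
      intro i _
      have : i + 1 + 1 = i + 2 := by omega
      rw [this]
    rw [step, Finset.sum_range_succ (fun j => 2 ^ (j + 2) * (s n (j + 2) * s m (j + 2))) N]
    have hz : s m (N + 2) = 0 := htop m (N + 2) (by omega)
    simp only [hz]
    ring
  -- relate the short V-sum to the full one
  have hV : (∑ j ∈ Finset.range (N + 1), 2 ^ j * (s n j * s m (j + 2)))
      = ∑ k ∈ Finset.range (N + 2), 2 ^ k * (s n k * s m (k + 2)) := by
    rw [Finset.sum_range_succ (fun k => 2 ^ k * (s n k * s m (k + 2))) (N + 1)]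
    have hz : s m (N + 1 + 2) = 0 := htop m (N + 1 + 2) (by omega)
    simp only [hz]
    ring
  rw [hA, hB, hU, hT, hV]
  ring
end

section
/- Let s_{n,k} be the little Schröder triangle defined by s_{0,0}=1 and s_{n,k} = s_{n-1,k-1} + 3 s_{n-1,k} + 2 s_{n-1,k+1}. Then for all integers m ≥ n ≥ 0: ∑_{k=0}^{m} 2^k (s_{n,k} s_{m,k+1} + s_{n,k+1} s_{m,k}) = s_{m+n,1}. -/
open Finset

/-- Corollary 2.3: weighted sums of 2×2 permanents of the little Schröder triangle. -/
theorem stmt7 (s : ℕ → ℕ → ℤ)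
    (h00 : s 0 0 = 1) (htop : ∀ n k, n < k → s n k = 0)
    (h0 : ∀ n, s (n + 1) 0 = 3 * s n 0 + 2 * s n 1)
    (h : ∀ n k, s (n + 1) (k + 1) = s n k + 3 * s n (k + 1) + 2 * s n (k + 2))
    (n m : ℕ) (hnm : n ≤ m) :
    ∑ k ∈ Finset.range (m + 1),
        2 ^ k * (s n k * s m (k + 1) + s n (k + 1) * s m k)
      = s (m + n) 1 := by
  have key : ∀ (a b N : ℕ),
      (∑ k ∈ Finset.range (N + 2),
          2 ^ k * (s (a+1) k * s b (k+1) + s (a+1) (k+1) * s b k))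
        - (∑ k ∈ Finset.range (N + 2),
          2 ^ k * (s a k * s (b+1) (k+1) + s a (k+1) * s (b+1) k))
      = 2 ^ (N+2) * (s a (N+3) * s b (N+1) - s a (N+1) * s b (N+3)) := by
    intro a b N
    induction N with
    | zero =>
      have e1 : s (a+1) 1 = s a 0 + 3 * s a 1 + 2 * s a 2 := h a 0
      have e2 : s (a+1) 2 = s a 1 + 3 * s a 2 + 2 * s a 3 := h a 1
      have f1 : s (b+1) 1 = s b 0 + 3 * s b 1 + 2 * s b 2 := h b 0
      have f2 : s (b+1) 2 = s b 1 + 3 * s b 2 + 2 * s b 3 := h b 1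
      simp only [Finset.sum_range_succ, Finset.sum_range_zero]
      norm_num
      rw [e1, e2, f1, f2, h0 a, h0 b]
      ring
    | succ N ih =>
      have e1 : s (a+1) (N+2) = s a (N+1) + 3 * s a (N+2) + 2 * s a (N+3) := h a (N+1)
      have e2 : s (a+1) (N+3) = s a (N+2) + 3 * s a (N+3) + 2 * s a (N+4) := h a (N+2)
      have f1 : s (b+1) (N+2) = s b (N+1) + 3 * s b (N+2) + 2 * s b (N+3) := h b (N+1)
      have f2 : s (b+1) (N+3) = s b (N+2) + 3 * s b (N+3) + 2 * s b (N+4) := h b (N+2)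
      have hr : N + 1 + 2 = (N + 2) + 1 := rfl
      rw [hr,
        Finset.sum_range_succ
          (fun k => 2 ^ k * (s (a+1) k * s b (k+1) + s (a+1) (k+1) * s b k)) (N+2),
        Finset.sum_range_succ
          (fun k => 2 ^ k * (s a k * s (b+1) (k+1) + s a (k+1) * s (b+1) k)) (N+2)]
      simp only [show N+2+1 = N+3 from rfl, show N+1+3 = N+4 from rfl,
        show N+1+1 = N+2 from rfl, show N+1+2 = N+3 from rfl]
      rw [e1, e2, f1, f2]
      linear_combination ih
  induction n generalizing m with
  | zero =>
    rw [Finset.sum_eq_single 0]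
    · rw [h00, htop 0 1 one_pos]
      norm_num
    · intro b _ hb
      rw [htop 0 b (by omega), htop 0 (b+1) (by omega)]
      ring
    · intro habs
      exact absurd (Finset.mem_range.mpr (by omega)) habs
  | succ n ih =>
    obtain ⟨m', rfl⟩ : ∃ m', m = m' + 1 := ⟨m - 1, by omega⟩
    have hk := key n (m' + 1) m'
    rw [htop n (m' + 3) (by omega), htop (m' + 1) (m' + 3) (by omega)] at hk
    have hk' : (∑ k ∈ Finset.range (m' + 2),
          2 ^ k * (s (n+1) k * s (m'+1) (k+1) + s (n+1) (k+1) * s (m'+1) k))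
        = ∑ k ∈ Finset.range (m' + 2),
          2 ^ k * (s n k * s (m'+2) (k+1) + s n (k+1) * s (m'+2) k) := by
      linear_combination hk
    have hext : (∑ k ∈ Finset.range (m' + 3),
          2 ^ k * (s n k * s (m'+2) (k+1) + s n (k+1) * s (m'+2) k))
        = ∑ k ∈ Finset.range (m' + 2),
          2 ^ k * (s n k * s (m'+2) (k+1) + s n (k+1) * s (m'+2) k) := by
      have hr : m' + 3 = (m' + 2) + 1 := rfl
      rw [hr, Finset.sum_range_succ, htop n (m' + 2) (by omega),
        htop n (m' + 2 + 1) (by omega), htop (m' + 2) (m' + 2 + 1) (by omega)]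
      ring
    have hih := ih (m' + 2) (by omega)
    have : (m' + 2) + n = (m' + 1) + (n + 1) := by omega
    rw [this] at hih
    calc ∑ k ∈ Finset.range (m' + 1 + 1),
        2 ^ k * (s (n+1) k * s (m'+1) (k+1) + s (n+1) (k+1) * s (m'+1) k)
        = ∑ k ∈ Finset.range (m' + 2),
          2 ^ k * (s n k * s (m'+2) (k+1) + s n (k+1) * s (m'+2) k) := hk'
      _ = ∑ k ∈ Finset.range (m' + 2 + 1),
          2 ^ k * (s n k * s (m'+2) (k+1) + s n (k+1) * s (m'+2) k) := hext.symm
      _ = s (m' + 1 + (n + 1)) 1 := hih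
end

section
/- Let N_{n,k}(z) be the triangle defined by N_{0,0}=1 and N_{n,k}(z) = N_{n-1,k-1}(z) + (z+1) N_{n-1,k}(z) + z N_{n-1,k+1}(z). Then for all m ≥ n ≥ 0: ∑_{k=0}^{m} z^k (N_{n,k}(z) N_{m,k+1}(z) + N_{n,k+1}(z) N_{m,k}(z)) = N_{m+n,1}(z). -/
open Polynomial Finset

private lemma unpeel (g : ℕ → Polynomial ℤ) (m : ℕ) :
    ∑ k ∈ Finset.range m, X ^ (k + 1) * g (k + 1) + g 0
      = ∑ k ∈ Finset.range (m + 1), X ^ k * g k := by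
  rw [Finset.sum_range_succ' (fun k => X ^ k * g k) m]
  simp

private lemma lshift (g : ℕ → Polynomial ℤ) (m : ℕ) (hg : g m = 0) :
    ∑ k ∈ Finset.range m, X ^ (k + 1) * g k
      = X * ∑ k ∈ Finset.range (m + 1), X ^ k * g k := by
  rw [Finset.sum_range_succ, hg, mul_zero, add_zero, Finset.mul_sum]
  exact Finset.sum_congr rfl fun k _ => by ring

private lemma half (N : ℕ → ℕ → Polynomial ℤ)
    (h0 : ∀ n, N (n + 1) 0 = (X + 1) * N n 0 + X * N n 1)
    (h : ∀ n k, N (n + 1) (k + 1) = N n k + (X + 1) * N n (k + 1) + X * N n (k + 2))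
    (m p q : ℕ) (hq : N q (m + 2) = 0) :
    ∑ k ∈ Finset.range (m + 1),
        X ^ k * (N (p + 1) k * N q (k + 1) + N (p + 1) (k + 1) * N q k)
      = ∑ k ∈ Finset.range (m + 1), X ^ k *
          (N p k * N q k
            + (X + 1) * (N p k * N q (k + 1) + N p (k + 1) * N q k)
            + X * (N p (k + 1) * N q (k + 1))
            + X * (N p k * N q (k + 2))
            + X * (N p (k + 2) * N q k)) := by
  have split : ∑ k ∈ Finset.range (m + 1),
        X ^ k * (N (p + 1) k * N q (k + 1) + N (p + 1) (k + 1) * N q k)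
      = (∑ k ∈ Finset.range (m + 1), X ^ k * (N (p + 1) k * N q (k + 1)))
        + ∑ k ∈ Finset.range (m + 1), X ^ k * (N (p + 1) (k + 1) * N q k) := by
    rw [← Finset.sum_add_distrib]
    exact Finset.sum_congr rfl fun k _ => by ring
  have hT1 : (∑ k ∈ Finset.range (m + 1), X ^ k * (N (p + 1) k * N q (k + 1)))
      = X * (∑ k ∈ Finset.range (m + 1), X ^ k * (N p k * N q (k + 2)))
        + (X + 1) * (∑ k ∈ Finset.range (m + 1), X ^ k * (N p k * N q (k + 1)))
        + X * (∑ k ∈ Finset.range (m + 1), X ^ k * (N p (k + 1) * N q (k + 1))) := by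
    rw [Finset.sum_range_succ' (fun k => X ^ k * (N (p + 1) k * N q (k + 1))) m]
    simp only [h, h0, pow_zero, one_mul]
    have step : ∑ k ∈ Finset.range m,
          X ^ (k + 1) * ((N p k + (X + 1) * N p (k + 1) + X * N p (k + 2)) * N q (k + 2))
        = (∑ k ∈ Finset.range m, X ^ (k + 1) * (N p k * N q (k + 2)))
          + (∑ k ∈ Finset.range m, X ^ (k + 1) * ((X + 1) * (N p (k + 1) * N q (k + 2))))
          + (∑ k ∈ Finset.range m, X ^ (k + 1) * (X * (N p (k + 2) * N q (k + 2)))) := by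
      rw [← Finset.sum_add_distrib, ← Finset.sum_add_distrib]
      exact Finset.sum_congr rfl fun k _ => by ring
    rw [step]
    have e1 : ∑ k ∈ Finset.range m, X ^ (k + 1) * (N p k * N q (k + 2))
        = X * ∑ k ∈ Finset.range (m + 1), X ^ k * (N p k * N q (k + 2)) :=
      lshift (fun k => N p k * N q (k + 2)) m (by simp [hq])
    have e2 : ∑ k ∈ Finset.range m, X ^ (k + 1) * ((X + 1) * (N p (k + 1) * N q (k + 2)))
        = (X + 1) * ∑ k ∈ Finset.range m, X ^ (k + 1) * (N p (k + 1) * N q (k + 2)) := by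
      rw [Finset.mul_sum]
      exact Finset.sum_congr rfl fun k _ => by ring
    have e3 : ∑ k ∈ Finset.range m, X ^ (k + 1) * (X * (N p (k + 2) * N q (k + 2)))
        = X * ∑ k ∈ Finset.range m, X ^ (k + 1) * (N p (k + 2) * N q (k + 2)) := by
      rw [Finset.mul_sum]
      exact Finset.sum_congr rfl fun k _ => by ring
    have u1 : ∑ k ∈ Finset.range m, X ^ (k + 1) * (N p (k + 1) * N q (k + 2))
          + N p 0 * N q 1
        = ∑ k ∈ Finset.range (m + 1), X ^ k * (N p k * N q (k + 1)) :=
      unpeel (fun k => N p k * N q (k + 1)) m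
    have u2 : ∑ k ∈ Finset.range m, X ^ (k + 1) * (N p (k + 2) * N q (k + 2))
          + N p 1 * N q 1
        = ∑ k ∈ Finset.range (m + 1), X ^ k * (N p (k + 1) * N q (k + 1)) :=
      unpeel (fun k => N p (k + 1) * N q (k + 1)) m
    rw [e1, e2, e3, ← u1, ← u2]
    ring
  have hT2 : (∑ k ∈ Finset.range (m + 1), X ^ k * (N (p + 1) (k + 1) * N q k))
      = ∑ k ∈ Finset.range (m + 1),
          X ^ k * ((N p k + (X + 1) * N p (k + 1) + X * N p (k + 2)) * N q k) := by
    simp only [h]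
  rw [split, hT1, hT2, Finset.mul_sum, Finset.mul_sum, Finset.mul_sum]
  rw [← Finset.sum_add_distrib, ← Finset.sum_add_distrib, ← Finset.sum_add_distrib]
  exact Finset.sum_congr rfl fun k _ => by ring

private lemma key (N : ℕ → ℕ → Polynomial ℤ)
    (h0 : ∀ n, N (n + 1) 0 = (X + 1) * N n 0 + X * N n 1)
    (h : ∀ n k, N (n + 1) (k + 1) = N n k + (X + 1) * N n (k + 1) + X * N n (k + 2))
    (p q m : ℕ) (hp : N p (m + 2) = 0) (hq : N q (m + 2) = 0) :
    ∑ k ∈ Finset.range (m + 1),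
        X ^ k * (N (p + 1) k * N q (k + 1) + N (p + 1) (k + 1) * N q k)
      = ∑ k ∈ Finset.range (m + 1),
        X ^ k * (N p k * N (q + 1) (k + 1) + N p (k + 1) * N (q + 1) k) := by
  rw [half N h0 h m p q hq]
  have h2 := half N h0 h m q p hp
  have h3 : ∑ k ∈ Finset.range (m + 1),
        X ^ k * (N p k * N (q + 1) (k + 1) + N p (k + 1) * N (q + 1) k)
      = ∑ k ∈ Finset.range (m + 1),
        X ^ k * (N (q + 1) k * N p (k + 1) + N (q + 1) (k + 1) * N p k) :=
    Finset.sum_congr rfl fun k _ => by ring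
  rw [h3, h2]
  exact Finset.sum_congr rfl fun k _ => by ring

/-- Corollary 3.5: weighted sums of 2×2 permanents of the generalized Narayana triangle. -/
theorem stmt9 (N : ℕ → ℕ → Polynomial ℤ)
    (h00 : N 0 0 = 1) (htop : ∀ n k, n < k → N n k = 0)
    (h0 : ∀ n, N (n + 1) 0 = (Polynomial.X + 1) * N n 0 + Polynomial.X * N n 1)
    (h : ∀ n k, N (n + 1) (k + 1)
        = N n k + (Polynomial.X + 1) * N n (k + 1) + Polynomial.X * N n (k + 2))
    (n m : ℕ) (hnm : n ≤ m) :
    ∑ k ∈ Finset.range (m + 1),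
        Polynomial.X ^ k * (N n k * N m (k + 1) + N n (k + 1) * N m k)
      = N (m + n) 1 := by
  induction n generalizing m with
  | zero =>
    rw [Finset.sum_range_succ'
      (fun k => X ^ k * (N 0 k * N m (k + 1) + N 0 (k + 1) * N m k)) m]
    have z1 : ∀ k : ℕ, N 0 (k + 1) = 0 := fun k => htop 0 (k + 1) (Nat.succ_pos k)
    simp [z1, h00]
  | succ n IH =>
    rw [key N h0 h n m m (htop n (m + 2) (by omega)) (htop m (m + 2) (by omega))]
    have IH' := IH (m + 1) (by omega)
    rw [Finset.sum_range_succ] at IH'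
    rw [htop n (m + 1) (by omega), htop n (m + 2) (by omega)] at IH'
    simp only [zero_mul, mul_zero, add_zero, zero_add] at IH'
    rw [show m + (n + 1) = m + 1 + n from by omega]
    exact IH'
end

section
/- Define F_{m,n}(z) = ∑_{k=0}^{n} (−z)^k (N_{n,k}(z) N_{m,k+1}(z) − N_{n,k+1}(z) N_{m,k}(z)), where N_{n,k}(z) is the generalized Narayana triangle. Then F_{m,n}(z) satisfies the recurrence F_{m,n}(z) = 2(z+1) F_{m−1,n}(z) − F_{m−1,n+1}(z) for m ≥ n+1, with F_{n,n}(z) = 0. -/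
open Polynomial Finset

/-- Theorem 3.6, recurrence part: `F_{m,n}(z) = 2(z+1) F_{m-1,n}(z) - F_{m-1,n+1}(z)`
for `m ≥ n+1`, with `F_{n,n}(z) = 0`. -/
theorem stmt10 (N : ℕ → ℕ → Polynomial ℤ)
    (h00 : N 0 0 = 1) (htop : ∀ n k, n < k → N n k = 0)
    (h0 : ∀ n, N (n + 1) 0 = (Polynomial.X + 1) * N n 0 + Polynomial.X * N n 1)
    (h : ∀ n k, N (n + 1) (k + 1)
        = N n k + (Polynomial.X + 1) * N n (k + 1) + Polynomial.X * N n (k + 2))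
    (F : ℕ → ℕ → Polynomial ℤ)
    (hF : ∀ m n, F m n = ∑ k ∈ Finset.range (n + 1),
        (-Polynomial.X) ^ k * (N n k * N m (k + 1) - N n (k + 1) * N m k)) :
    (∀ n, F n n = 0) ∧
    (∀ m n, n ≤ m → F (m + 1) n = 2 * (Polynomial.X + 1) * F m n - F m (n + 1)) := by
  constructor
  · intro n
    rw [hF]
    apply Finset.sum_eq_zero
    intro k _
    ring
  · intro m n _
    have hz1 : N n (n + 1) = 0 := htop n (n + 1) (by omega)
    have hz2 : N n (n + 2) = 0 := htop n (n + 2) (by omega)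
    have hz3 : N (n + 1) (n + 2) = 0 := htop (n + 1) (n + 2) (by omega)
    set d : ℕ → Polynomial ℤ := fun k => match k with
      | 0 => 0
      | Nat.succ j => (-X) ^ (j + 1) * (N n j * N m (j + 2) - N n (j + 2) * N m j)
      with hd
    have ht : ∀ k, (-X) ^ k * (N n k * N (m + 1) (k + 1) - N n (k + 1) * N (m + 1) k)
        + (-X) ^ k * (N (n + 1) k * N m (k + 1) - N (n + 1) (k + 1) * N m k)
        = 2 * (X + 1) * ((-X) ^ k * (N n k * N m (k + 1) - N n (k + 1) * N m k))
          + (d k - d (k + 1)) := by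
      intro k
      cases k with
      | zero => simp only [hd]; rw [h m 0, h0 m, h0 n, h n 0]; ring
      | succ j => simp only [hd]; rw [h m (j + 1), h m j, h n (j + 1), h n j]; ring
    have hsum : (∑ k ∈ Finset.range (n + 1),
          (-X) ^ k * (N n k * N (m + 1) (k + 1) - N n (k + 1) * N (m + 1) k))
        + ∑ k ∈ Finset.range (n + 1),
          (-X) ^ k * (N (n + 1) k * N m (k + 1) - N (n + 1) (k + 1) * N m k)
        = 2 * (X + 1) * (∑ k ∈ Finset.range (n + 1),
            (-X) ^ k * (N n k * N m (k + 1) - N n (k + 1) * N m k))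
          + (d 0 - d (n + 1)) := by
      rw [← Finset.sum_add_distrib, Finset.mul_sum, ← Finset.sum_range_sub' d (n + 1),
        ← Finset.sum_add_distrib]
      exact Finset.sum_congr rfl fun k _ => ht k
    have hB : (-X) ^ (n + 1) * (N (n + 1) (n + 1) * N m (n + 1 + 1)
        - N (n + 1) (n + 1 + 1) * N m (n + 1)) = d (n + 1) := by
      simp only [hd]
      rw [h n n, hz1, hz2, hz3]
      ring
    rw [hF (m + 1) n, hF m (n + 1), hF m n]
    rw [Finset.sum_range_succ
      (fun k => (-X) ^ k * (N (n + 1) k * N m (k + 1) - N (n + 1) (k + 1) * N m k)) (n + 1)]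
    have hd0 : d 0 = 0 := rfl
    rw [hd0, ← hB] at hsum
    linear_combination hsum
end

section
/- With F_{m,n}(z) = ∑_{k=0}^{n} (−z)^k (N_{n,k}(z) N_{m,k+1}(z) − N_{n,k+1}(z) N_{m,k}(z)) built from the generalized Narayana triangle, one has F_{n+1,n}(z) = N_n(z^2) for all n ≥ 0, where N_n is the n-th Narayana polynomial. -/
open Polynomial Finset

/-- The `n`-th Narayana polynomial. -/
noncomputable def nar (n : ℕ) : Polynomial ℚ :=
  ∑ i ∈ Finset.range (n + 1),
    Polynomial.C ((1 : ℚ) / ((n : ℚ) + 1) * ((n + 1).choose i) * ((n + 1).choose (i + 1)))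
      * Polynomial.X ^ i

/-- Chebyshev-type coefficient triangle. -/
noncomputable def gam : ℕ → ℕ → Polynomial ℚ
  | 0, j => if j = 0 then 1 else 0
  | 1, j => if j = 0 then 2 * (Polynomial.X + 1) else 0
  | (d+2), j => 2 * (Polynomial.X + 1) * gam (d+1) j - (if j = 0 then 0 else gam d (j-1))

lemma gam_eq_zero : ∀ d j, d < 2*j → gam d j = 0
  | 0, j, hj => by
    have : j ≠ 0 := by omega
    simp [gam, this]
  | 1, j, hj => by
    have : j ≠ 0 := by omega
    simp [gam, this]
  | (d+2), j, hj => by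
    have h1 : gam (d+1) j = 0 := gam_eq_zero (d+1) j (by omega)
    have hj0 : j ≠ 0 := by omega
    have h2 : gam d (j-1) = 0 := gam_eq_zero d (j-1) (by omega)
    simp [gam, h1, hj0, h2]

lemma gam_diag : ∀ n, gam (2*n) n = (-1)^n := by
  intro n
  induction n with
  | zero => simp [gam]
  | succ m ih =>
    have e : 2*(m+1) = (2*m)+2 := by ring
    rw [e, gam]
    have h1 : gam (2*m+1) (m+1) = 0 := gam_eq_zero _ _ (by omega)
    have hm : m + 1 ≠ 0 := by omega
    simp [h1, hm, ih, pow_succ]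

/-- closed-form coefficients of the concrete triangle -/
noncomputable def ac (n k i : ℕ) : ℚ :=
  (n.choose i) * (n.choose (k+i)) - (if i = 0 then 0 else (n.choose (i-1)) * (n.choose (k+i+1)))

lemma ac_pascal (n k i : ℕ) : ac (n+1) (k+1) (i+1)
    = ac n k (i+1) + ac n (k+1) (i+1) + ac n (k+1) i + ac n (k+2) i := by
  rcases i with _ | i
  · simp only [ac]
    norm_num
    simp only [show k+1+(0+1) = k+2 from by omega, show k+1+(0+1)+1 = k+3 from by omega,
      show k+(0+1) = k+1 from by omega, show k+(0+1)+1 = k+2 from by omega,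
      show k+1+0 = k+1 from by omega, show k+1+0+1 = k+2 from by omega,
      show k+2+0 = k+2 from by omega, show k+2+0+1 = k+3 from by omega, zero_add]
    rw [show (n+1).choose (k+2) = n.choose (k+1) + n.choose (k+2) from Nat.choose_succ_succ n (k+1),
        show (n+1).choose (k+3) = n.choose (k+2) + n.choose (k+3) from Nat.choose_succ_succ n (k+2)]
    push_cast
    ring
  · simp only [ac]
    norm_num
    simp only [show k+1+(i+1+1) = k+i+3 from by omega, show k+1+(i+1+1)+1 = k+i+4 from by omega,
      show k+(i+1+1) = k+i+2 from by omega, show k+(i+1+1)+1 = k+i+3 from by omega,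
      show k+1+(i+1) = k+i+2 from by omega, show k+1+(i+1)+1 = k+i+3 from by omega,
      show k+2+(i+1) = k+i+3 from by omega, show k+2+(i+1)+1 = k+i+4 from by omega,
      show i+1+1 = i+2 from by omega]
    rw [show (n+1).choose (i+2) = n.choose (i+1) + n.choose (i+2) from Nat.choose_succ_succ n (i+1),
        show (n+1).choose (i+1) = n.choose i + n.choose (i+1) from Nat.choose_succ_succ n i,
        show (n+1).choose (k+i+3) = n.choose (k+i+2) + n.choose (k+i+3) from Nat.choose_succ_succ n (k+i+2),
        show (n+1).choose (k+i+4) = n.choose (k+i+3) + n.choose (k+i+4) from Nat.choose_succ_succ n (k+i+3)]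
    push_cast
    ring

lemma ac_pascal0 (n i : ℕ) : ac (n+1) 0 (i+1) = ac n 0 (i+1) + ac n 0 i + ac n 1 i := by
  rcases i with _ | i
  · simp only [ac]
    norm_num
    rw [show (n+1).choose 2 = n.choose 1 + n.choose 2 from Nat.choose_succ_succ n 1]
    push_cast [Nat.choose_one_right]
    ring
  · simp only [ac]
    norm_num
    simp only [show i+1+1 = i+2 from by omega, show 1+(i+1) = i+2 from by omega,
      show 1+(i+1)+1 = i+3 from by omega, show 0+(i+1+1) = i+2 from by omega,
      show 0+(i+1+1)+1 = i+3 from by omega, show 0+(i+1) = i+1 from by omega,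
      show 0+(i+1)+1 = i+2 from by omega]
    rw [show (n+1).choose (i+2) = n.choose (i+1) + n.choose (i+2) from Nat.choose_succ_succ n (i+1),
        show (n+1).choose (i+1) = n.choose i + n.choose (i+1) from Nat.choose_succ_succ n i,
        show (n+1).choose (i+3) = n.choose (i+2) + n.choose (i+3) from Nat.choose_succ_succ n (i+2)]
    push_cast
    ring

noncomputable def MM (n k : ℕ) : Polynomial ℚ :=
  ∑ i ∈ Finset.range (n+1), Polynomial.C (ac n k i) * Polynomial.X ^ i

lemma ac_eq_zero {n i : ℕ} (k : ℕ) (h : n < i) : ac n k i = 0 := by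
  have h1 : n.choose i = 0 := Nat.choose_eq_zero_of_lt h
  have h2 : n.choose (k+i+1) = 0 := Nat.choose_eq_zero_of_lt (by omega)
  simp [ac, h1, h2]

lemma MM_coeff (n k m : ℕ) : (MM n k).coeff m = ac n k m := by
  rw [MM, Polynomial.finset_sum_coeff]
  simp only [Polynomial.coeff_C_mul, Polynomial.coeff_X_pow]
  rw [Finset.sum_congr rfl (fun i _ => by rw [mul_ite, mul_one, mul_zero])]
  simp only [eq_comm (a := m)]
  rw [Finset.sum_ite_eq' (Finset.range (n+1)) m (fun i => ac n k i)]
  by_cases hm : m ∈ Finset.range (n+1)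
  · simp [hm]
  · simp [hm]
    exact (ac_eq_zero k (by simpa using by simp at hm; omega)).symm

lemma MM00 : MM 0 0 = 1 := by
  simp [MM, ac]

lemma MMtop {n k : ℕ} (h : n < k) : MM n k = 0 := by
  rw [MM]
  apply Finset.sum_eq_zero
  intro i hi
  have h1 : n.choose (k+i) = 0 := Nat.choose_eq_zero_of_lt (by omega)
  have h2 : n.choose (k+i+1) = 0 := Nat.choose_eq_zero_of_lt (by omega)
  simp [ac, h1, h2]

lemma MMrec0 (n : ℕ) : MM (n+1) 0 = (Polynomial.X + 1) * MM n 0 + Polynomial.X * MM n 1 := by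
  ext m
  rcases m with _ | i
  · simp [MM_coeff, add_mul, mul_coeff_zero, ac]
  · simp only [Polynomial.coeff_add, add_mul, one_mul, Polynomial.coeff_X_mul, MM_coeff]
    have := ac_pascal0 n i
    linarith

lemma MMrec (n k : ℕ) : MM (n+1) (k+1)
    = MM n k + (Polynomial.X + 1) * MM n (k+1) + Polynomial.X * MM n (k+2) := by
  ext m
  rcases m with _ | i
  · simp only [Polynomial.coeff_add, add_mul, one_mul, MM_coeff, mul_coeff_zero,
      Polynomial.coeff_X_zero, zero_mul, add_zero, zero_add]
    simp [ac, Nat.choose_succ_succ]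
  · simp only [Polynomial.coeff_add, add_mul, one_mul, Polynomial.coeff_X_mul, MM_coeff]
    have := ac_pascal n k i
    linarith

lemma narcoef (n i : ℕ) (hi : i ≤ n) :
    (1:ℚ)/((n:ℚ)+1) * ((n+1).choose i) * ((n+1).choose (i+1)) = ac n 0 i := by
  have hn1 : ((n:ℚ)+1) ≠ 0 := by positivity
  rcases i with _ | i
  · simp [ac, Nat.choose_one_right]
    rw [inv_mul_cancel₀ (by positivity)]
  · by_cases hin : i + 1 = n
    · subst hin
      simp only [ac]
      norm_num
      rw [inv_mul_cancel₀ (by positivity)]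
    · obtain ⟨j, rfl⟩ : ∃ j, n = i + j + 2 := ⟨n - i - 2, by omega⟩
      simp only [ac]
      norm_num
      have c1 : ((i+j+2).choose (i+1) : ℚ) = (Nat.factorial (i+j+2)) / ((Nat.factorial (i+1)) * (Nat.factorial (j+1))) := by
        rw [Nat.cast_choose ℚ (by omega), show i+j+2 - (i+1) = j+1 from by omega]
      have c2 : ((i+j+2).choose i : ℚ) = (Nat.factorial (i+j+2)) / ((Nat.factorial (i)) * (Nat.factorial (j+2))) := by
        rw [Nat.cast_choose ℚ (by omega), show i+j+2 - i = j+2 from by omega]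
      have c3 : ((i+j+2).choose (i+2) : ℚ) = (Nat.factorial (i+j+2)) / ((Nat.factorial (i+2)) * (Nat.factorial (j))) := by
        rw [Nat.cast_choose ℚ (by omega), show i+j+2 - (i+2) = j from by omega]
      have c4 : ((i+j+2+1).choose (i+1) : ℚ) = (Nat.factorial (i+j+3)) / ((Nat.factorial (i+1)) * (Nat.factorial (j+2))) := by
        rw [Nat.cast_choose ℚ (by omega), show i+j+2+1 - (i+1) = j+2 from by omega, show i+j+2+1 = i+j+3 from by omega]
      have c5 : ((i+j+2+1).choose (i+1+1) : ℚ) = (Nat.factorial (i+j+3)) / ((Nat.factorial (i+2)) * (Nat.factorial (j+1))) := by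
        rw [Nat.cast_choose ℚ (by omega), show i+j+2+1 - (i+1+1) = j+1 from by omega, show i+j+2+1 = i+j+3 from by omega]
      rw [show i+1+1 = i+2 from rfl] at *
      rw [c1, c2, c3, c4, c5]
      rw [show ((Nat.factorial (i+j+3)) : ℚ) = (((i:ℚ)+(j:ℚ)+3)) * (Nat.factorial (i+j+2)) by
            rw [show i+j+3 = (i+j+2)+1 from rfl, Nat.factorial_succ]; push_cast; ring,
          show ((Nat.factorial (i+2)) : ℚ) = ((i:ℚ)+2)*((i:ℚ)+1) * (Nat.factorial (i)) by
            rw [show i+2 = (i+1)+1 from rfl, Nat.factorial_succ, Nat.factorial_succ]; push_cast; ring,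
          show ((Nat.factorial (i+1)) : ℚ) = ((i:ℚ)+1) * (Nat.factorial (i)) by rw [Nat.factorial_succ]; push_cast; ring,
          show ((Nat.factorial (j+2)) : ℚ) = ((j:ℚ)+2)*((j:ℚ)+1) * (Nat.factorial (j)) by
            rw [show j+2 = (j+1)+1 from rfl, Nat.factorial_succ, Nat.factorial_succ]; push_cast; ring,
          show ((Nat.factorial (j+1)) : ℚ) = ((j:ℚ)+1) * (Nat.factorial (j)) by rw [Nat.factorial_succ]; push_cast; ring]
      have hf1 : ((Nat.factorial (i+j+2)) : ℚ) ≠ 0 := by positivity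
      have hf2 : ((Nat.factorial (i)) : ℚ) ≠ 0 := by positivity
      have hf3 : ((Nat.factorial (j)) : ℚ) ≠ 0 := by positivity
      have g1 : ((i:ℚ)+1) ≠ 0 := by positivity
      have g2 : ((i:ℚ)+2) ≠ 0 := by positivity
      have g3 : ((j:ℚ)+1) ≠ 0 := by positivity
      have g4 : ((j:ℚ)+2) ≠ 0 := by positivity
      push_cast at hn1 ⊢
      field_simp
      ring

lemma MMnar (n : ℕ) : MM n 0 = nar n := by
  rw [MM, nar]
  refine Finset.sum_congr rfl fun i hi => ?_
  rw [narcoef n i (by simp at hi; omega)]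

lemma shift_sum (K : ℕ) (g : ℕ → Polynomial ℚ) :
    ∑ k ∈ Finset.range K, (-Polynomial.X)^(k+1) * g (k+1)
      = (∑ k ∈ Finset.range K, (-Polynomial.X)^k * g k) + (-Polynomial.X)^K * g K - g 0 := by
  have h1 := Finset.sum_range_succ' (fun k => (-Polynomial.X)^k * g k) K
  have h2 := Finset.sum_range_succ (fun k => (-Polynomial.X)^k * g k) K
  simp only [pow_zero, one_mul] at h1
  linear_combination h2 - h1

/-- Theorem 3.6, initial value: `F_{n+1,n}(z) = N_n(z^2)`. -/
theorem stmt11 (N : ℕ → ℕ → Polynomial ℚ)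
    (h00 : N 0 0 = 1) (htop : ∀ n k, n < k → N n k = 0)
    (h0 : ∀ n, N (n + 1) 0 = (Polynomial.X + 1) * N n 0 + Polynomial.X * N n 1)
    (h : ∀ n k, N (n + 1) (k + 1)
        = N n k + (Polynomial.X + 1) * N n (k + 1) + Polynomial.X * N n (k + 2))
    (F : ℕ → ℕ → Polynomial ℚ)
    (hF : ∀ m n, F m n = ∑ k ∈ Finset.range (n + 1),
        (-Polynomial.X) ^ k * (N n k * N m (k + 1) - N n (k + 1) * N m k))
    (n : ℕ) :
    F (n + 1) n = (nar n).comp (Polynomial.X ^ 2) := by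
  classical
  set X := Polynomial.X (R := ℚ) with hX
  -- basic values
  have hN11 : N 1 1 = 1 := by
    have e := h 0 0
    rw [h00, htop 0 1 (by omega), htop 0 2 (by omega)] at e
    rw [e]; ring
  have hN10 : N 1 0 = X + 1 := by
    have e := h0 0
    rw [h00, htop 0 1 (by omega)] at e
    rw [e]; ring
  have hN21 : N 2 1 = 2*(X+1) := by
    have e := h 1 0
    rw [hN10, hN11, htop 1 2 (by omega)] at e
    rw [e]; ring
  -- extended representation of F
  have hFK : ∀ m n' K, n' + 1 ≤ K → F m n' = ∑ k ∈ Finset.range K,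
      (-X) ^ k * (N n' k * N m (k + 1) - N n' (k + 1) * N m k) := by
    intro m n' K hK
    rw [hF]
    apply Finset.sum_subset (Finset.range_subset_range.2 hK)
    intro k hk hnk
    have hk1 : n' < k := by simp at hk hnk; omega
    rw [htop n' k hk1, htop n' (k+1) (by omega)]
    ring
  have Fdiag : ∀ n', F n' n' = 0 := by
    intro n'
    rw [hF]
    apply Finset.sum_eq_zero
    intro k _
    ring
  have Fseed : ∀ d, F d 0 = N d 1 := by
    intro d
    rw [hF]
    rw [Finset.sum_range_one]
    rw [h00, htop 0 1 (by omega)]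
    ring
  -- the key recurrence
  have Frec : ∀ m n', F (m+1) n' + F m (n'+1) = 2*(X+1) * F m n' := by
    intro m n'
    have top : ∀ (a : ℕ) (b : ℕ → Polynomial ℚ),
        (∑ x ∈ Finset.range (n'+2), (-X)^x * (N n' (x+a) * b x))
          = ∑ x ∈ Finset.range (n'+1), (-X)^x * (N n' (x+a) * b x) := by
      intro a b
      rw [Finset.sum_range_succ, htop n' (n'+1+a) (by omega)]
      rw [zero_mul, mul_zero, add_zero]
    have top0 : ∀ (b : ℕ → Polynomial ℚ),
        (∑ x ∈ Finset.range (n'+2), (-X)^x * (N n' x * b x))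
          = ∑ x ∈ Finset.range (n'+1), (-X)^x * (N n' x * b x) := by
      intro b
      rw [Finset.sum_range_succ, htop n' (n'+1) (by omega)]
      rw [zero_mul, mul_zero, add_zero]
    have f1 : ∑ k ∈ Finset.range (n'+2), (-X)^k * (N n' k * N (m+1) (k+1))
        = (∑ k ∈ Finset.range (n'+2), (-X)^k * (N n' k * N m k))
          + (X+1) * ∑ k ∈ Finset.range (n'+2), (-X)^k * (N n' k * N m (k+1))
          + X * ∑ k ∈ Finset.range (n'+2), (-X)^k * (N n' k * N m (k+2)) := by
      rw [Finset.mul_sum, Finset.mul_sum, ← Finset.sum_add_distrib, ← Finset.sum_add_distrib]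
      refine Finset.sum_congr rfl fun k _ => ?_
      rw [h m k]; ring
    have f4 : ∑ k ∈ Finset.range (n'+2), (-X)^k * (N (n'+1) (k+1) * N m k)
        = (∑ k ∈ Finset.range (n'+2), (-X)^k * (N n' k * N m k))
          + (X+1) * ∑ k ∈ Finset.range (n'+2), (-X)^k * (N n' (k+1) * N m k)
          + X * ∑ k ∈ Finset.range (n'+2), (-X)^k * (N n' (k+2) * N m k) := by
      rw [Finset.mul_sum, Finset.mul_sum, ← Finset.sum_add_distrib, ← Finset.sum_add_distrib]
      refine Finset.sum_congr rfl fun k _ => ?_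
      rw [h n' k]; ring
    have f2 : ∑ k ∈ Finset.range (n'+2), (-X)^k * (N n' (k+1) * N (m+1) k)
        = -(X * ((∑ k ∈ Finset.range (n'+2), (-X)^k * (N n' (k+2) * N m k))
          + (X+1) * (∑ k ∈ Finset.range (n'+2), (-X)^k * (N n' (k+2) * N m (k+1)))
          + X * (∑ k ∈ Finset.range (n'+2), (-X)^k * (N n' (k+2) * N m (k+2)))))
          + N n' 1 * ((X+1) * N m 0 + X * N m 1) := by
      rw [Finset.sum_range_succ' (fun k => (-X)^k * (N n' (k+1) * N (m+1) k)) (n'+1)]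
      rw [h0 m]
      have e : ∀ x ∈ Finset.range (n'+1), (-X)^(x+1) * (N n' (x+1+1) * N (m+1) (x+1))
          = -(X*((-X)^x * (N n' (x+2) * N m x)) + X*((X+1)*((-X)^x * (N n' (x+2) * N m (x+1))))
              + X*(X*((-X)^x * (N n' (x+2) * N m (x+2))))) := by
        intro x _
        rw [h m x, pow_succ]; ring
      rw [Finset.sum_congr rfl e]
      rw [top 2 (fun x => N m x), top 2 (fun x => N m (x+1)), top 2 (fun x => N m (x+2))]
      simp only [Finset.sum_neg_distrib, Finset.sum_add_distrib, ← Finset.mul_sum]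
      ring
    have f3 : ∑ k ∈ Finset.range (n'+2), (-X)^k * (N (n'+1) k * N m (k+1))
        = -(X * ((∑ k ∈ Finset.range (n'+2), (-X)^k * (N n' k * N m (k+2)))
          + (X+1) * (∑ k ∈ Finset.range (n'+2), (-X)^k * (N n' (k+1) * N m (k+2)))
          + X * (∑ k ∈ Finset.range (n'+2), (-X)^k * (N n' (k+2) * N m (k+2)))))
          + ((X+1) * N n' 0 + X * N n' 1) * N m 1 := by
      rw [Finset.sum_range_succ' (fun k => (-X)^k * (N (n'+1) k * N m (k+1))) (n'+1)]
      rw [h0 n']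
      have e : ∀ x ∈ Finset.range (n'+1), (-X)^(x+1) * (N (n'+1) (x+1) * N m (x+1+1))
          = -(X*((-X)^x * (N n' x * N m (x+2))) + X*((X+1)*((-X)^x * (N n' (x+1) * N m (x+2))))
              + X*(X*((-X)^x * (N n' (x+2) * N m (x+2))))) := by
        intro x _
        rw [h n' x, pow_succ]; ring
      rw [Finset.sum_congr rfl e]
      rw [top0 (fun x => N m (x+2)), top 1 (fun x => N m (x+2)), top 2 (fun x => N m (x+2))]
      simp only [Finset.sum_neg_distrib, Finset.sum_add_distrib, ← Finset.mul_sum]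
      ring
    have f6 : X * (∑ k ∈ Finset.range (n'+2), (-X)^k * (N n' (k+2) * N m (k+1)))
        = -(∑ k ∈ Finset.range (n'+2), (-X)^k * (N n' (k+1) * N m k)) + N n' 1 * N m 0 := by
      have hs := shift_sum (n'+2) (fun t => N n' (t+1) * N m t)
      rw [htop n' (n'+2+1) (by omega)] at hs
      have e : ∀ k ∈ Finset.range (n'+2), (-X)^(k+1) * (N n' (k+1+1) * N m (k+1))
          = -(X * ((-X)^k * (N n' (k+2) * N m (k+1)))) := by
        intro k _
        rw [pow_succ]; ring
      rw [Finset.sum_congr rfl e, Finset.sum_neg_distrib, ← Finset.mul_sum] at hs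
      linear_combination -hs
    have f7 : X * (∑ k ∈ Finset.range (n'+2), (-X)^k * (N n' (k+1) * N m (k+2)))
        = -(∑ k ∈ Finset.range (n'+2), (-X)^k * (N n' k * N m (k+1))) + N n' 0 * N m 1 := by
      have hs := shift_sum (n'+2) (fun t => N n' t * N m (t+1))
      rw [htop n' (n'+2) (by omega)] at hs
      have e : ∀ k ∈ Finset.range (n'+2), (-X)^(k+1) * (N n' (k+1) * N m (k+1+1))
          = -(X * ((-X)^k * (N n' (k+1) * N m (k+2)))) := by
        intro k _
        rw [pow_succ]; ring
      rw [Finset.sum_congr rfl e, Finset.sum_neg_distrib, ← Finset.mul_sum] at hs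
      linear_combination -hs
    rw [hFK (m+1) n' (n'+2) (by omega), hFK m (n'+1) (n'+2) (by omega),
        hFK m n' (n'+2) (by omega)]
    simp only [mul_sub, Finset.sum_sub_distrib]
    rw [f1, f2, f3, f4]
    linear_combination (X+1)*f6 - (X+1)*f7
  -- L1 identities
  have L1b : ∀ d, N (d+2) 1 = 2*(X+1) * N (d+1) 1 - (1+X^2) * N d 1 + X^2 * N d 3 := by
    intro d
    have e1 := h (d+1) 0
    have e2 := h d 0
    have e3 := h d 1
    have e4 := h0 d
    linear_combination e1 + e4 + X*e3 - (X+1)*e2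
  have L1a : ∀ d k, N (d+2) (2*k+3)
      = 2*(X+1)*N (d+1) (2*k+3) + N d (2*k+1) - (1+X^2)*N d (2*k+3) + X^2*N d (2*k+5) := by
    intro d k
    have e1 := h (d+1) (2*k+2)
    have e2 := h d (2*k+1)
    have e3 := h d (2*k+3)
    have e4 := h d (2*k+2)
    linear_combination e1 + e2 + X*e3 - (X+1)*e4
  -- the z^2-side expansion
  have LB : ∀ d k, (∑ j ∈ Finset.range (d+1), gam d j * (MM j k).comp (X^2))
      = (-1)^k * N (d+1) (2*k+1) := by
    intro d
    induction d using Nat.strong_induction_on with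
    | _ d ih =>
      match d with
      | 0 =>
        intro k
        rw [Finset.sum_range_one, show gam 0 0 = 1 from by rw [gam]; simp]
        rcases k with _ | k'
        · rw [MM00]
          simp [hN11]
        · rw [MMtop (show 0 < k'+1 by omega)]
          rw [htop 1 (2*(k'+1)+1) (by omega)]
          simp
      | 1 =>
        intro k
        rw [Finset.sum_range_succ, Finset.sum_range_one,
            show gam 1 0 = 2*(X+1) from by rw [gam]; simp [hX],
            show gam 1 1 = 0 from by rw [gam]; simp]
        rcases k with _ | k'
        · rw [MM00]
          simp [hN21]
        · rw [MMtop (show 0 < k'+1 by omega)]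
          rw [htop 2 (2*(k'+1)+1) (by omega)]
          simp
      | (e+2) =>
        intro k
        have ih1 := ih (e+1) (by omega)
        have ih0 := ih e (by omega)
        rw [Finset.sum_congr rfl (fun j _ => by
          rw [show gam (e+2) j = 2*(X+1)*gam (e+1) j - (if j = 0 then 0 else gam e (j-1)) from by rw [gam], sub_mul])]
        rw [Finset.sum_sub_distrib]
        have A1 : ∑ j ∈ Finset.range (e+3), 2*(X+1)*gam (e+1) j * (MM j k).comp (X^2)
            = 2*(X+1) * ((-1)^k * N (e+2) (2*k+1)) := by
          rw [Finset.sum_range_succ, gam_eq_zero (e+1) (e+2) (by omega)]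
          rw [show (2*(X+1)*(0:Polynomial ℚ)) * (MM (e+2) k).comp (X^2) = 0 from by ring, add_zero]
          rw [show (∑ j ∈ Finset.range (e+2), 2*(X+1)*gam (e+1) j * (MM j k).comp (X^2))
              = 2*(X+1) * ∑ j ∈ Finset.range (e+2), gam (e+1) j * (MM j k).comp (X^2) from by
            rw [Finset.mul_sum]; exact Finset.sum_congr rfl fun j _ => by ring]
          rw [ih1 k]
        have A2 : ∑ j ∈ Finset.range (e+3), (if j = 0 then 0 else gam e (j-1)) * (MM j k).comp (X^2)
            = ∑ j ∈ Finset.range (e+1), gam e j * (MM (j+1) k).comp (X^2) := by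
          rw [Finset.sum_range_succ' (fun j => (if j = 0 then 0 else gam e (j-1)) * (MM j k).comp (X^2)) (e+2)]
          norm_num
          rw [Finset.sum_range_succ, gam_eq_zero e (e+1) (by omega), zero_mul, add_zero]
        rw [A1, A2]
        rcases k with _ | k'
        · rw [Finset.sum_congr rfl (fun j _ => by
            rw [show (MM (j+1) 0).comp (X^2)
                = (X^2+1) * (MM j 0).comp (X^2) + X^2 * (MM j 1).comp (X^2) from by
              rw [MMrec0 j]
              simp [Polynomial.add_comp, Polynomial.mul_comp, Polynomial.X_comp, Polynomial.one_comp]])]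
          rw [show (∑ j ∈ Finset.range (e+1), gam e j * ((X^2+1)*(MM j 0).comp (X^2) + X^2*(MM j 1).comp (X^2)))
              = (X^2+1) * (∑ j ∈ Finset.range (e+1), gam e j * (MM j 0).comp (X^2))
                + X^2 * (∑ j ∈ Finset.range (e+1), gam e j * (MM j 1).comp (X^2)) from by
            rw [Finset.mul_sum, Finset.mul_sum, ← Finset.sum_add_distrib]
            exact Finset.sum_congr rfl fun j _ => by ring]
          rw [ih0 0, ih0 1]
          have l1 := L1b (e+1)
          simp only [show e+1+2 = e+2+1 from by omega, show e+1+1 = e+2 from by omega] at l1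
          norm_num at l1 ⊢
          linear_combination -l1
        · rw [Finset.sum_congr rfl (fun j _ => by
            rw [show (MM (j+1) (k'+1)).comp (X^2)
                = (MM j k').comp (X^2) + (X^2+1) * (MM j (k'+1)).comp (X^2)
                  + X^2 * (MM j (k'+2)).comp (X^2) from by
              rw [MMrec j k']
              simp [Polynomial.add_comp, Polynomial.mul_comp, Polynomial.X_comp, Polynomial.one_comp]])]
          rw [show (∑ j ∈ Finset.range (e+1), gam e j * ((MM j k').comp (X^2)
                + (X^2+1)*(MM j (k'+1)).comp (X^2) + X^2*(MM j (k'+2)).comp (X^2)))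
              = (∑ j ∈ Finset.range (e+1), gam e j * (MM j k').comp (X^2))
                + (X^2+1) * (∑ j ∈ Finset.range (e+1), gam e j * (MM j (k'+1)).comp (X^2))
                + X^2 * (∑ j ∈ Finset.range (e+1), gam e j * (MM j (k'+2)).comp (X^2)) from by
            rw [Finset.mul_sum, Finset.mul_sum, ← Finset.sum_add_distrib, ← Finset.sum_add_distrib]
            exact Finset.sum_congr rfl fun j _ => by ring]
          rw [ih0 k', ih0 (k'+1), ih0 (k'+2)]
          have l1 := L1a (e+1) k'
          simp only [show e+1+2 = e+2+1 from by omega, show e+1+1 = e+2 from by omega,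
            show 2*k'+3 = 2*(k'+1)+1 from by omega, show 2*k'+5 = 2*(k'+2)+1 from by omega] at l1
          linear_combination ((-1:Polynomial ℚ)^k') * l1
  -- the F-side expansion
  have LA : ∀ d n', F (n'+d+1) n' = ∑ j ∈ Finset.range (d+1), gam d j * F (n'+j+1) (n'+j) := by
    intro d
    induction d using Nat.strong_induction_on with
    | _ d ih =>
      match d with
      | 0 =>
        intro n'
        rw [Finset.sum_range_one, show gam 0 0 = 1 from by rw [gam]; simp, one_mul]
        norm_num
      | 1 =>
        intro n'
        rw [Finset.sum_range_succ, Finset.sum_range_one,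
            show gam 1 0 = 2*(X+1) from by rw [gam]; simp [hX],
            show gam 1 1 = 0 from by rw [gam]; simp, zero_mul, add_zero]
        norm_num
        have fr := Frec (n'+1) n'
        have fd := Fdiag (n'+1)
        linear_combination fr - fd
      | (e+2) =>
        intro n'
        have ih1 := ih (e+1) (by omega) n'
        have ih0 := ih e (by omega) (n'+1)
        have fr := Frec (n'+e+2) n'
        rw [Finset.sum_congr rfl (fun j _ => by
          rw [show gam (e+2) j = 2*(X+1)*gam (e+1) j - (if j = 0 then 0 else gam e (j-1)) from by rw [gam], sub_mul])]
        rw [Finset.sum_sub_distrib]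
        have A1 : ∑ j ∈ Finset.range (e+3), 2*(X+1)*gam (e+1) j * F (n'+j+1) (n'+j)
            = 2*(X+1) * F (n'+(e+1)+1) n' := by
          rw [Finset.sum_range_succ, gam_eq_zero (e+1) (e+2) (by omega)]
          rw [show (2*(X+1)*(0:Polynomial ℚ)) * F (n'+(e+2)+1) (n'+(e+2)) = 0 from by ring, add_zero]
          rw [show (∑ j ∈ Finset.range (e+2), 2*(X+1)*gam (e+1) j * F (n'+j+1) (n'+j))
              = 2*(X+1) * ∑ j ∈ Finset.range (e+2), gam (e+1) j * F (n'+j+1) (n'+j) from by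
            rw [Finset.mul_sum]; exact Finset.sum_congr rfl fun j _ => by ring]
          rw [← ih1]
        have A2 : ∑ j ∈ Finset.range (e+3), (if j = 0 then 0 else gam e (j-1)) * F (n'+j+1) (n'+j)
            = F (n'+1+e+1) (n'+1) := by
          rw [Finset.sum_range_succ' (fun j => (if j = 0 then 0 else gam e (j-1)) * F (n'+j+1) (n'+j)) (e+2)]
          norm_num
          rw [Finset.sum_range_succ, gam_eq_zero e (e+1) (by omega), zero_mul, add_zero]
          rw [ih0]
          refine Finset.sum_congr rfl fun j _ => ?_
          rw [show n'+(j+1)+1 = n'+1+j+1 from by omega, show n'+(j+1) = n'+1+j from by omega]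
        rw [A1, A2]
        simp only [← Nat.add_assoc] at fr ⊢
        simp +arith +decide at fr ⊢
        linear_combination fr
  -- assembly
  have key : ∀ d, ∑ j ∈ Finset.range (d+1), gam d j * ((MM j 0).comp (X^2) - F (j+1) j) = 0 := by
    intro d
    have hA := LA d 0
    simp only [Nat.zero_add, zero_add] at hA
    have hB := LB d 0
    norm_num at hB
    rw [Fseed (d+1)] at hA
    simp only [mul_sub, Finset.sum_sub_distrib]
    rw [hB, ← hA]
    norm_num
  have main : ∀ m, F (m+1) m = (MM m 0).comp (X^2) := by
    intro m
    induction m using Nat.strong_induction_on with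
    | _ m ih =>
      have e0 := key (2*m)
      have hmem : m ∈ Finset.range (2*m+1) := by simp; omega
      have hzero : ∀ b ∈ Finset.range (2*m+1), b ≠ m
          → gam (2*m) b * ((MM b 0).comp (X^2) - F (b+1) b) = 0 := by
        intro b hb hbm
        rcases Nat.lt_or_ge b m with hlt | hge
        · rw [ih b hlt, sub_self, mul_zero]
        · rw [gam_eq_zero (2*m) b (by omega), zero_mul]
      rw [Finset.sum_eq_single_of_mem m hmem hzero, gam_diag m] at e0
      have hne : ((-1:Polynomial ℚ))^m ≠ 0 := pow_ne_zero _ (neg_ne_zero.mpr one_ne_zero)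
      have h2 := (mul_eq_zero.mp e0).resolve_left hne
      have h3 := sub_eq_zero.mp h2
      exact h3.symm
  rw [main n, MMnar n]
end

section
/- For m ≥ 1, the generalized Narayana triangle entry satisfies N_{m,1}(z) = ∑_{j=0}^{⌊(m−1)/2⌋} (−1)^j C(m−1−j, j) N_j(z^2) (2(z+1))^{m−1−2j}. -/
open Polynomial Finset



lemma key1 (m k i : ℕ) :
    ((k:ℚ)+1)/((m:ℚ)+2) * ((m+2).choose (i+1)) * ((m+2).choose (i+k+2))
    = (k:ℚ)/((m:ℚ)+1) * ((m+1).choose (i+1)) * ((m+1).choose (i+k+1))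
    + ((k:ℚ)+1)/((m:ℚ)+1) * ((m+1).choose (i+1)) * ((m+1).choose (i+k+2))
    + ((k:ℚ)+1)/((m:ℚ)+1) * ((m+1).choose i) * ((m+1).choose (i+k+1))
    + ((k:ℚ)+2)/((m:ℚ)+1) * ((m+1).choose i) * ((m+1).choose (i+k+2)) := by
  have hm2 : ((m:ℚ)+2) ≠ 0 := by positivity
  have e1 : ((m:ℚ)+2) * ((m+1).choose i) = ((m+2).choose (i+1)) * ((i:ℚ)+1) := by
    have := Nat.add_one_mul_choose_eq (m+1) i
    exact_mod_cast congrArg (Nat.cast : ℕ → ℚ) this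
  have e2 : ((m:ℚ)+2) * ((m+1).choose (i+k+1)) = ((m+2).choose (i+k+2)) * ((i:ℚ)+(k:ℚ)+2) := by
    have := Nat.add_one_mul_choose_eq (m+1) (i+k+1)
    have := congrArg (Nat.cast : ℕ → ℚ) this
    push_cast at this ⊢
    linarith [this]
  have p1 : (((m+2).choose (i+1) : ℕ) : ℚ) = ((m+1).choose i : ℚ) + ((m+1).choose (i+1) : ℚ) := by
    rw [show m+2 = (m+1)+1 from rfl, Nat.choose_succ_succ (m+1) i]
    push_cast; ring
  have p2 : (((m+2).choose (i+k+2) : ℕ) : ℚ) = ((m+1).choose (i+k+1) : ℚ) + ((m+1).choose (i+k+2) : ℚ) := by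
    rw [show m+2 = (m+1)+1 from rfl, show i+k+2 = (i+k+1)+1 from rfl, Nat.choose_succ_succ (m+1) (i+k+1)]
    push_cast; ring
  have hb : ((m+1).choose i : ℚ) = ((m+2).choose (i+1)) * ((i:ℚ)+1)/((m:ℚ)+2) := by
    rw [eq_div_iff hm2]; linarith [e1]
  have hd : ((m+1).choose (i+k+1) : ℚ) = ((m+2).choose (i+k+2)) * ((i:ℚ)+(k:ℚ)+2)/((m:ℚ)+2) := by
    rw [eq_div_iff hm2]; linarith [e2]
  have ha : ((m+1).choose (i+1) : ℚ)
      = ((m+2).choose (i+1)) - ((m+2).choose (i+1)) * ((i:ℚ)+1)/((m:ℚ)+2) := by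
    rw [← hb]; linarith [p1]
  have hc : ((m+1).choose (i+k+2) : ℚ)
      = ((m+2).choose (i+k+2)) - ((m+2).choose (i+k+2)) * ((i:ℚ)+(k:ℚ)+2)/((m:ℚ)+2) := by
    rw [← hd]; linarith [p2]
  rw [ha, hb, hc, hd]
  have hm1 : ((m:ℚ)+1) ≠ 0 := by positivity
  field_simp
  ring

lemma key0 (m k : ℕ) :
    ((k:ℚ)+1)/((m:ℚ)+2) * ((m+2).choose (k+1))
    = (k:ℚ)/((m:ℚ)+1) * ((m+1).choose k) + ((k:ℚ)+1)/((m:ℚ)+1) * ((m+1).choose (k+1)) := by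
  have hm2 : ((m:ℚ)+2) ≠ 0 := by positivity
  have e1 : ((m:ℚ)+2) * ((m+1).choose k) = ((m+2).choose (k+1)) * ((k:ℚ)+1) := by
    have := Nat.add_one_mul_choose_eq (m+1) k
    exact_mod_cast congrArg (Nat.cast : ℕ → ℚ) this
  have p1 : (((m+2).choose (k+1) : ℕ) : ℚ) = ((m+1).choose k : ℚ) + ((m+1).choose (k+1) : ℚ) := by
    rw [show m+2 = (m+1)+1 from rfl, Nat.choose_succ_succ (m+1) k]
    push_cast; ring
  have hb : ((m+1).choose k : ℚ) = ((m+2).choose (k+1)) * ((k:ℚ)+1)/((m:ℚ)+2) := by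
    rw [eq_div_iff hm2]; linarith [e1]
  have hc : ((m+1).choose (k+1) : ℚ)
      = ((m+2).choose (k+1)) - ((m+2).choose (k+1)) * ((k:ℚ)+1)/((m:ℚ)+2) := by
    rw [← hb]; linarith [p1]
  rw [hb, hc]
  have hm1 : ((m:ℚ)+1) ≠ 0 := by positivity
  field_simp
  ring

noncomputable def Ek (m k : ℕ) : Polynomial ℚ :=
  ∑ i ∈ Finset.range (m+1),
    Polynomial.C (((k:ℚ)+1)/((m:ℚ)+1) * ((m+1).choose i) * ((m+1).choose (i+k+1)))
      * Polynomial.X ^ i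

noncomputable def Dk (m k : ℕ) : Polynomial ℚ :=
  ∑ i ∈ Finset.range (m+1),
    Polynomial.C ((k:ℚ)/((m:ℚ)+1) * ((m+1).choose i) * ((m+1).choose (i+k)))
      * Polynomial.X ^ i

lemma coeff_Ek (m k n : ℕ) :
    (Ek m k).coeff n = ((k:ℚ)+1)/((m:ℚ)+1) * ((m+1).choose n) * ((m+1).choose (n+k+1)) := by
  classical
  rw [Ek, Polynomial.finset_sum_coeff]
  simp only [Polynomial.coeff_C_mul, Polynomial.coeff_X_pow, mul_ite, mul_one, mul_zero]
  rw [Finset.sum_ite_eq (Finset.range (m+1)) n]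
  by_cases hn : n ∈ Finset.range (m+1)
  · simp [hn]
  · simp only [hn, if_false]
    have : m+1 < n+k+1 := by simp at hn; omega
    rw [Nat.choose_eq_zero_of_lt this]
    push_cast; ring

lemma coeff_Dk (m k n : ℕ) :
    (Dk m k).coeff n = (k:ℚ)/((m:ℚ)+1) * ((m+1).choose n) * ((m+1).choose (n+k)) := by
  classical
  rw [Dk, Polynomial.finset_sum_coeff]
  simp only [Polynomial.coeff_C_mul, Polynomial.coeff_X_pow, mul_ite, mul_one, mul_zero]
  rw [Finset.sum_ite_eq (Finset.range (m+1)) n]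
  by_cases hn : n ∈ Finset.range (m+1)
  · simp [hn]
  · simp only [hn, if_false]
    rcases k with _ | k
    · push_cast; ring
    · have : m+1 < n+(k+1) := by simp at hn; omega
      rw [Nat.choose_eq_zero_of_lt this]
      push_cast; ring

lemma Ek_step (m k : ℕ) :
    Ek (m+1) k = Dk m k + (Polynomial.X + 1) * Ek m k + Polynomial.X * Ek m (k+1) := by
  ext n
  rw [Polynomial.coeff_add, Polynomial.coeff_add, coeff_Ek, coeff_Dk, add_mul, one_mul,
    Polynomial.coeff_add]
  cases n with
  | zero =>
      rw [Polynomial.mul_coeff_zero, Polynomial.mul_coeff_zero, Polynomial.coeff_X_zero,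
        coeff_Ek]
      simp only [zero_add, Nat.choose_zero_right, Nat.cast_one, zero_mul, add_zero, mul_one,
        one_mul]
      rw [show m+1+1 = m+2 from rfl]
      push_cast
      rw [show ((m:ℚ)+1+1) = (m:ℚ)+2 from by ring]
      linarith [key0 m k]
  | succ n =>
      rw [Polynomial.coeff_X_mul, Polynomial.coeff_X_mul, coeff_Ek, coeff_Ek, coeff_Ek]
      rw [show n+1+k+1 = n+k+2 from by omega, show n+1+k = n+k+1 from by omega,
        show n+(k+1)+1 = n+k+2 from by omega, show m+1+1 = m+2 from rfl]
      push_cast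
      rw [show ((m:ℚ)+1+1) = (m:ℚ)+2 from by ring, show ((k:ℚ)+1+1) = (k:ℚ)+2 from by ring]
      linarith [key1 m k n]

lemma Dk_zero (m : ℕ) : Dk m 0 = 0 := by
  simp [Dk]

lemma Dk_succ (m k : ℕ) : Dk m (k+1) = Ek m k := by
  refine Finset.sum_congr rfl fun i _ => ?_
  congr 2
  push_cast
  ring

lemma Ek_zero_eq_nar (m : ℕ) : Ek m 0 = nar m := by
  refine Finset.sum_congr rfl fun i _ => ?_
  congr 2
  push_cast
  ring

lemma colExplicit (N : ℕ → ℕ → Polynomial ℚ)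
    (h00 : N 0 0 = 1) (htop : ∀ n k, n < k → N n k = 0)
    (h0 : ∀ n, N (n + 1) 0 = (Polynomial.X + 1) * N n 0 + Polynomial.X * N n 1)
    (h : ∀ n k, N (n + 1) (k + 1)
        = N n k + (Polynomial.X + 1) * N n (k + 1) + Polynomial.X * N n (k + 2)) :
    ∀ m k, N m k = Ek m k := by
  intro m
  induction m with
  | zero =>
      intro k
      cases k with
      | zero => rw [h00]; simp [Ek]
      | succ k =>
          rw [htop 0 (k+1) (by omega)]
          simp [Ek]
          exact Or.inr (Nat.choose_eq_zero_of_lt (by omega))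
  | succ m ih =>
      intro k
      cases k with
      | zero =>
          rw [h0 m, ih 0, ih 1, Ek_step m 0, Dk_zero]
          ring
      | succ k =>
          rw [h m k, ih k, ih (k+1), ih (k+2), Ek_step m (k+1), Dk_succ]

noncomputable def TT (N : ℕ → ℕ → Polynomial ℚ) (d k : ℕ) : Polynomial ℚ :=
  ∑ j ∈ Finset.range (d/2+1),
    (-1 : Polynomial ℚ)^j * Polynomial.C (((d+k-j).choose (j+k) : ℚ))
      * (N (j+k) k).comp (Polynomial.X^2) * (2*(Polynomial.X+1))^(d-2*j)

section
variable (N : ℕ → ℕ → Polynomial ℚ)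
    (h00 : N 0 0 = 1) (htop : ∀ n k, n < k → N n k = 0)
    (h0 : ∀ n, N (n + 1) 0 = (Polynomial.X + 1) * N n 0 + Polynomial.X * N n 1)
    (h : ∀ n k, N (n + 1) (k + 1)
        = N n k + (Polynomial.X + 1) * N n (k + 1) + Polynomial.X * N n (k + 2))

include h00 htop h0 h

set_option linter.unusedSectionVars false

set_option linter.unusedSectionVars false

lemma diag : ∀ n, N n n = 1 := by
  intro n
  induction n with
  | zero => exact h00
  | succ n ih =>
      rw [h n n, ih, htop n (n+1) (by omega), htop n (n+2) (by omega)]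
      ring

lemma hcomp0 (n : ℕ) : (N (n+1) 0).comp (X^2)
    = (X^2+1)*(N n 0).comp (X^2) + X^2*(N n 1).comp (X^2) := by
  rw [h0 n]
  simp [add_comp, mul_comp, X_comp, one_comp]

lemma hcomp (n k : ℕ) : (N (n+1) (k+1)).comp (X^2)
    = (N n k).comp (X^2) + (X^2+1)*(N n (k+1)).comp (X^2) + X^2*(N n (k+2)).comp (X^2) := by
  rw [h n k]
  simp [add_comp, mul_comp, X_comp, one_comp]

lemma Tstep0 (d : ℕ) :
    TT N (d+2) 0 = 2*(X+1)*TT N (d+1) 0 - (1+X^2)*TT N d 0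
      + X^2*(if 2 ≤ d then TT N (d-2) 1 else 0) := by
  have hB : 2*(X+1)*TT N (d+1) 0 = ∑ j ∈ Finset.range (d/2+2),
      (-1:Polynomial ℚ)^j * Polynomial.C (((d+1-j).choose j : ℚ))
        * (N j 0).comp (X^2) * (2*(X+1))^(d+2-2*j) := by
    rw [TT, Finset.mul_sum]
    rw [← Finset.sum_subset (Finset.range_subset_range.2 (by omega : (d+1)/2+1 ≤ d/2+2))
      (fun j hj hnj => by
        simp only [Finset.mem_range] at hj hnj
        rw [Nat.choose_eq_zero_of_lt (by omega : d+1-j < j)]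
        simp)]
    refine Finset.sum_congr rfl fun j hj => ?_
    simp only [Finset.mem_range] at hj
    simp only [add_zero, Nat.add_zero]
    rw [show d+2-2*j = (d+1-2*j)+1 from by omega, pow_succ]
    ring
  have hC : (1+X^2)*TT N d 0 = ∑ j ∈ Finset.range (d/2+2),
      (if j = 0 then 0 else (-1:Polynomial ℚ)^(j-1) * Polynomial.C (((d+1-j).choose (j-1) : ℚ))
        * (N (j-1) 0).comp (X^2) * (1+X^2) * (2*(X+1))^(d+2-2*j)) := by
    conv_rhs => rw [show d/2+2 = d/2+1+1 from rfl, Finset.sum_range_succ']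
    simp only [if_pos rfl, if_true, eq_self_iff_true, add_zero, Nat.succ_ne_zero, if_false, Nat.add_sub_cancel]
    rw [TT, Finset.mul_sum]
    refine Finset.sum_congr rfl fun j hj => ?_
    simp only [Finset.mem_range] at hj
    simp only [add_zero, Nat.add_zero]
    rw [show d+1-(j+1) = d-j from by omega, show d+2-2*(j+1) = d-2*j from by omega]
    ring
  have hE : X^2*(if 2 ≤ d then TT N (d-2) 1 else 0) = ∑ j ∈ Finset.range (d/2+2),
      (if j ≤ 1 then 0 else (-1:Polynomial ℚ)^j * Polynomial.C (((d+1-j).choose (j-1) : ℚ))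
        * (N (j-1) 1).comp (X^2) * X^2 * (2*(X+1))^(d+2-2*j)) := by
    conv_rhs => rw [show d/2+2 = d/2+1+1 from rfl, Finset.sum_range_succ',
      Finset.sum_range_succ']
    simp only [if_pos (by omega : (0:ℕ) ≤ 1), if_pos (by omega : (0:ℕ)+1 ≤ 1), if_true, eq_self_iff_true, add_zero]
    rcases le_or_gt 2 d with hd | hd
    · rw [if_pos hd, TT, Finset.mul_sum]
      rw [show (d-2)/2+1 = d/2 from by omega]
      refine Finset.sum_congr rfl fun j hj => ?_
      simp only [Finset.mem_range] at hj
      rw [if_neg (by omega : ¬ (j+1+1 ≤ 1))]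
      rw [show j+1+1-1 = j+1 from by omega, show d+1-(j+1+1) = d-2+1-j from by omega,
        show d+2-2*(j+1+1) = d-2-2*j from by omega, show j+1+1 = j+2 from rfl]
      rw [show (-1:Polynomial ℚ)^(j+2) = (-1)^j * (-1)^2 from by rw [pow_add]]
      ring
    · rw [if_neg (by omega)]
      rw [show d/2 = 0 from by omega]
      simp
  rw [hB, hC, hE, ← Finset.sum_sub_distrib, ← Finset.sum_add_distrib]
  rw [TT, show (d+2)/2+1 = d/2+2 from by omega]
  refine Finset.sum_congr rfl fun j hj => ?_
  simp only [Finset.mem_range] at hj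
  simp only [add_zero, Nat.add_zero]
  rcases j with _ | j
  · simp
  · have pas : (((d+2-(j+1)).choose (j+1) : ℕ) : ℚ)
        = ((d+1-(j+1)).choose (j+1) : ℚ) + ((d+1-(j+1)).choose j : ℚ) := by
      rw [show d+2-(j+1) = (d+1-(j+1))+1 from by omega, Nat.choose_succ_succ' (d+1-(j+1)) j]
      push_cast; ring
    rw [if_neg (Nat.succ_ne_zero j), show j+1-1 = j from rfl, pas, Polynomial.C_add]
    rcases j with _ | j
    · rw [if_pos (le_refl 1), hcomp0 N h00 htop h0 h 0, htop 0 1 (by omega)]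
      simp only [Polynomial.zero_comp]
      ring
    · rw [if_neg (by omega : ¬ (j+1+1:ℕ) ≤ 1), hcomp0 N h00 htop h0 h (j+1)]
      rw [show (-1:Polynomial ℚ)^(j+1+1) = (-1)^(j+1) * (-1) from by rw [pow_succ]]
      ring

set_option linter.unusedSectionVars false

lemma TstepS (d k : ℕ) :
    TT N (d+2) (k+1) = 2*(X+1)*TT N (d+1) (k+1) - (1+X^2)*TT N d (k+1)
      + X^2*(if 2 ≤ d then TT N (d-2) (k+2) else 0) + TT N (d+2) k := by
  have hB : 2*(X+1)*TT N (d+1) (k+1) = ∑ j ∈ Finset.range (d/2+2),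
      (-1:Polynomial ℚ)^j * Polynomial.C (((d+1+(k+1)-j).choose (j+(k+1)) : ℚ))
        * (N (j+(k+1)) (k+1)).comp (X^2) * (2*(X+1))^(d+2-2*j) := by
    rw [TT, Finset.mul_sum]
    rw [← Finset.sum_subset (Finset.range_subset_range.2 (by omega : (d+1)/2+1 ≤ d/2+2))
      (fun j hj hnj => by
        simp only [Finset.mem_range] at hj hnj
        rw [Nat.choose_eq_zero_of_lt (by omega : d+1+(k+1)-j < j+(k+1))]
        simp)]
    refine Finset.sum_congr rfl fun j hj => ?_
    simp only [Finset.mem_range] at hj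
    rw [show d+2-2*j = (d+1-2*j)+1 from by omega, pow_succ]
    ring
  have hC : (1+X^2)*TT N d (k+1) = ∑ j ∈ Finset.range (d/2+2),
      (if j = 0 then 0 else (-1:Polynomial ℚ)^(j-1)
        * Polynomial.C (((d+1+(k+1)-j).choose (j-1+(k+1)) : ℚ))
        * (N (j-1+(k+1)) (k+1)).comp (X^2) * (1+X^2) * (2*(X+1))^(d+2-2*j)) := by
    conv_rhs => rw [show d/2+2 = d/2+1+1 from rfl, Finset.sum_range_succ']
    simp only [if_pos rfl, if_true, eq_self_iff_true, add_zero, Nat.succ_ne_zero, if_false,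
      Nat.add_sub_cancel]
    rw [TT, Finset.mul_sum]
    refine Finset.sum_congr rfl fun j hj => ?_
    simp only [Finset.mem_range] at hj
    rw [show d+1+(k+1)-(j+1) = d+(k+1)-j from by omega,
      show d+2-2*(j+1) = d-2*j from by omega]
    ring
  have hE : X^2*(if 2 ≤ d then TT N (d-2) (k+2) else 0) = ∑ j ∈ Finset.range (d/2+2),
      (if j ≤ 1 then 0 else (-1:Polynomial ℚ)^j
        * Polynomial.C (((d+1+(k+1)-j).choose (j-1+(k+1)) : ℚ))
        * (N (j-1+(k+1)) (k+2)).comp (X^2) * X^2 * (2*(X+1))^(d+2-2*j)) := by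
    conv_rhs => rw [show d/2+2 = d/2+1+1 from rfl, Finset.sum_range_succ',
      Finset.sum_range_succ']
    simp only [if_pos (by omega : (0:ℕ) ≤ 1), if_pos (by omega : (0:ℕ)+1 ≤ 1), if_true,
      eq_self_iff_true, add_zero]
    rcases le_or_gt 2 d with hd | hd
    · rw [if_pos hd, TT, Finset.mul_sum]
      rw [show (d-2)/2+1 = d/2 from by omega]
      refine Finset.sum_congr rfl fun j hj => ?_
      simp only [Finset.mem_range] at hj
      rw [if_neg (by omega : ¬ (j+1+1 ≤ 1))]
      rw [show j+1+1-1+(k+1) = j+(k+2) from by omega,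
        show d+1+(k+1)-(j+1+1) = d-2+(k+2)-j from by omega,
        show d+2-2*(j+1+1) = d-2-2*j from by omega,
        show (-1:Polynomial ℚ)^(j+1+1) = (-1)^j * (-1)^2 from by ring]
      ring
    · rw [if_neg (by omega)]
      rw [show d/2 = 0 from by omega]
      simp
  have hF : TT N (d+2) k = ∑ j ∈ Finset.range (d/2+2),
      (-1:Polynomial ℚ)^j * Polynomial.C (((d+1+(k+1)-j).choose (j+k) : ℚ))
        * (N (j+k) k).comp (X^2) * (2*(X+1))^(d+2-2*j) := by
    rw [TT, show (d+2)/2+1 = d/2+2 from by omega]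
    refine Finset.sum_congr rfl fun j hj => ?_
    rw [show d+2+k-j = d+1+(k+1)-j from by omega]
  rw [hB, hC, hE, hF, ← Finset.sum_sub_distrib, ← Finset.sum_add_distrib,
    ← Finset.sum_add_distrib]
  rw [TT, show (d+2)/2+1 = d/2+2 from by omega]
  refine Finset.sum_congr rfl fun j hj => ?_
  simp only [Finset.mem_range] at hj
  have pas : (((d+2+(k+1)-j).choose (j+(k+1)) : ℕ) : ℚ)
      = ((d+1+(k+1)-j).choose (j+(k+1)) : ℚ) + ((d+1+(k+1)-j).choose (j+k) : ℚ) := by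
    rw [show d+2+(k+1)-j = (d+1+(k+1)-j)+1 from by omega,
      show j+(k+1) = (j+k)+1 from by omega, Nat.choose_succ_succ' (d+1+(k+1)-j) (j+k)]
    push_cast
    ring
  rw [pas, Polynomial.C_add]
  rcases j with _ | j
  · simp only [Nat.zero_add]
    simp only [reduceIte, Nat.reduceLeDiff]
    rw [diag N h00 htop h0 h (k+1), diag N h00 htop h0 h k]
    simp only [Polynomial.one_comp]
    ring
  · rw [if_neg (Nat.succ_ne_zero j), show j+1-1 = j from rfl]
    rw [show j+1+(k+1) = (j+(k+1))+1 from by omega, hcomp N h00 htop h0 h (j+(k+1)) k]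
    rcases j with _ | j
    · rw [if_pos (le_refl 1), htop (0+(k+1)) (k+2) (by omega)]
      simp only [Polynomial.zero_comp, Nat.zero_add]
      rw [show 1+k = k+1 from by omega]
      ring
    · rw [if_neg (by omega : ¬ (j+1+1:ℕ) ≤ 1)]
      rw [show j+1+1+k = j+1+(k+1) from by omega]
      rw [show (-1:Polynomial ℚ)^(j+1+1) = (-1)^(j+1) * (-1) from by rw [pow_succ]]
      ring

lemma star : ∀ m,
    (N (m+2) 0 = 2*(X+1)*N (m+1) 0 - (1+X^2)*N m 0 + X^2*N m 2 - X*N m 0)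
    ∧ (N (m+2) 1 = 2*(X+1)*N (m+1) 1 - (1+X^2)*N m 1 + X^2*N m 3)
    ∧ ∀ k, N (m+2) (k+2)
        = 2*(X+1)*N (m+1) (k+2) - (1+X^2)*N m (k+2) + X^2*N m (k+4) + N m k := by
  have n10 : N 1 0 = X+1 := by
    rw [h0 0, h00, htop 0 1 (by omega)]; ring
  have n11 : N 1 1 = 1 := by
    rw [h 0 0, h00, htop 0 1 (by omega), htop 0 2 (by omega)]; ring
  intro m
  induction m with
  | zero =>
      refine ⟨?_, ?_, ?_⟩
      · rw [h0 1, n10, n11, h00, htop 0 2 (by omega)]; ring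
      · rw [h 1 0, n10, n11, htop 1 2 (by omega), htop 0 1 (by omega), htop 0 3 (by omega)]
        ring
      · intro k
        cases k with
        | zero =>
            rw [h 1 1, n11, htop 1 2 (by omega), htop 1 3 (by omega), htop 0 2 (by omega),
              htop 0 4 (by omega), h00]
            ring
        | succ k =>
            rw [h 1 (k+2), htop 1 (k+2) (by omega), htop 1 (k+3) (by omega),
              htop 1 (k+4) (by omega), htop 0 (k+3) (by omega), htop 0 (k+5) (by omega),
              htop 0 (k+1) (by omega)]
            ring
  | succ m ih =>
      obtain ⟨i0, i1, ik⟩ := ih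
      refine ⟨?_, ?_, ?_⟩
      · linear_combination (h0 (m+2)) - (2*(X+1))*(h0 (m+1)) + (1+X^2+X)*(h0 m)
          - X^2*(h m 1) + (X+1)*i0 + X*i1
      · linear_combination (h (m+2) 0) - (2*(X+1))*(h (m+1) 0) + (1+X^2)*(h m 0)
          - X^2*(h m 2) + i0 + (X+1)*i1 + X*(ik 0)
      · intro k
        cases k with
        | zero =>
            linear_combination (h (m+2) 1) - (2*(X+1))*(h (m+1) 1) + (1+X^2)*(h m 1)
              - X^2*(h m 3) - (h0 m) + i1 + (X+1)*(ik 0) + X*(ik 1)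
        | succ k =>
            linear_combination (h (m+2) (k+2)) - (2*(X+1))*(h (m+1) (k+2)) + (1+X^2)*(h m (k+2))
              - X^2*(h m (k+4)) - (h m k) + (ik k) + (X+1)*(ik (k+1)) + X*(ik (k+2))

lemma subdiag : ∀ n, N (n+1) n = Polynomial.C ((n:ℚ)+1) * (X+1) := by
  intro n
  induction n with
  | zero =>
      rw [h0 0, h00, htop 0 1 (by omega)]
      simp
  | succ n ih =>
      rw [h (n+1) n, ih, diag N h00 htop h0 h (n+1), htop (n+1) (n+2) (by omega)]
      push_cast
      simp only [Polynomial.C_add, Polynomial.C_1]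
      ring

lemma mainT : ∀ m k d, m = 2*k+1+d → N m (2*k+1) = TT N d k := by
  intro m
  induction m using Nat.strong_induction_on with
  | _ m ih =>
    intro k d hmd
    subst hmd
    match d with
    | 0 =>
        have hdg : N (2*k+1+0) (2*k+1) = 1 := diag N h00 htop h0 h (2*k+1)
        rw [hdg, TT]
        simp [Finset.sum_range_one, diag N h00 htop h0 h k, Nat.choose_self]
    | 1 =>
        rw [subdiag N h00 htop h0 h (2*k+1), TT, show (1:ℕ)/2+1 = 1 from by norm_num,
          Finset.sum_range_one, show 1+k-0 = k+1 from by omega, show 0+k = k from by omega,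
          Nat.choose_succ_self_right k, diag N h00 htop h0 h k, Polynomial.one_comp,
          show 1-2*0 = 1 from rfl, pow_one]
        rw [show ((2*k+1:ℕ):ℚ)+1 = ((k+1:ℕ):ℚ)*2 from by push_cast; ring, Polynomial.C_mul]
        rw [show (Polynomial.C (2:ℚ)) = 2 from by simp [map_ofNat]]
        ring
    | (d+2) =>
        match k with
        | 0 =>
            rw [show 2*0+1+(d+2) = d+1+2 from by omega, show 2*0+1 = 1 from by norm_num]
            rw [(star N h00 htop h0 h (d+1)).2.1]
            have eA : N (d+1+1) 1 = TT N (d+1) 0 := ih (d+1+1) (by omega) 0 (d+1) (by omega)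
            have eB : N (d+1) 1 = TT N d 0 := ih (d+1) (by omega) 0 d (by omega)
            rw [eA, eB, Tstep0 N h00 htop h0 h d]
            rcases le_or_gt 2 d with hd | hd
            · have eC : N (d+1) 3 = TT N (d-2) 1 := ih (d+1) (by omega) 1 (d-2) (by omega)
              rw [eC, if_pos hd]
            · rw [htop (d+1) 3 (by omega), if_neg (by omega)]
        | (k+1) =>
            rw [show 2*(k+1)+1+(d+2) = 2*k+d+3+2 from by omega,
              show 2*(k+1)+1 = 2*k+1+2 from by omega]
            rw [(star N h00 htop h0 h (2*k+d+3)).2.2 (2*k+1)]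
            have eA : N (2*k+d+3+1) (2*k+1+2) = TT N (d+1) (k+1) := by
              have := ih (2*k+d+3+1) (by omega) (k+1) (d+1) (by omega)
              rwa [show 2*(k+1)+1 = 2*k+1+2 from by omega] at this
            have eB : N (2*k+d+3) (2*k+1+2) = TT N d (k+1) := by
              have := ih (2*k+d+3) (by omega) (k+1) d (by omega)
              rwa [show 2*(k+1)+1 = 2*k+1+2 from by omega] at this
            have eD : N (2*k+d+3) (2*k+1) = TT N (d+2) k := ih (2*k+d+3) (by omega) k (d+2) (by omega)
            rw [eA, eB, eD, TstepS N h00 htop h0 h d k]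
            rcases le_or_gt 2 d with hd | hd
            · have eC : N (2*k+d+3) (2*k+1+4) = TT N (d-2) (k+2) := by
                have := ih (2*k+d+3) (by omega) (k+2) (d-2) (by omega)
                rwa [show 2*(k+2)+1 = 2*k+1+4 from by omega] at this
              rw [eC, if_pos hd]
            · rw [htop (2*k+d+3) (2*k+1+4) (by omega), if_neg (by omega)]

end

/-- Remark: `N_{m,1}(z) = ∑_j (-1)^j C(m-1-j,j) N_j(z^2) (2(z+1))^{m-1-2j}` for `m ≥ 1`. -/
theorem stmt14 (N : ℕ → ℕ → Polynomial ℚ)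
    (h00 : N 0 0 = 1) (htop : ∀ n k, n < k → N n k = 0)
    (h0 : ∀ n, N (n + 1) 0 = (Polynomial.X + 1) * N n 0 + Polynomial.X * N n 1)
    (h : ∀ n k, N (n + 1) (k + 1)
        = N n k + (Polynomial.X + 1) * N n (k + 1) + Polynomial.X * N n (k + 2))
    (m : ℕ) (hm : 1 ≤ m) :
    N m 1 = ∑ j ∈ Finset.range ((m - 1) / 2 + 1),
        (-1 : Polynomial ℚ) ^ j * Polynomial.C (((m - 1 - j).choose j : ℚ))
          * (nar j).comp (Polynomial.X ^ 2)
          * (2 * (Polynomial.X + 1)) ^ (m - 1 - 2 * j) := by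
  have key := mainT N h00 htop h0 h m 0 (m-1) (by omega)
  rw [key, TT]
  refine Finset.sum_congr rfl fun j hj => ?_
  rw [show m-1+0-j = m-1-j from by omega, show j+0 = j from rfl,
    colExplicit N h00 htop h0 h j 0, Ek_zero_eq_nar]
end

section
/- Let M_{n,k} = ∑_{j=0}^{n-k} C(j+k−1, j) x^{n−k−j} y^{j} (with M_{n,0}=x^n). Then for all integers m, n ≥ 0: ∑_{k=0}^{min(m,n)} y^{2k} (M_{n,k} M_{m,k+1} − M_{n,k+1} M_{m,k}) = ∑_{k=1}^{max(m,n)} (C(m+n−k, n) − C(m+n−k, m)) x^{k−1} y^{m+n−k}. -/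
open Finset MvPolynomial

variable {R : Type*} [CommRing R]

def ff (x y : R) (n k : ℕ) : R :=
  if k ≤ n then
    ∑ j ∈ Finset.range (n - k + 1), ((j + k - 1).choose j : R) * x ^ (n - k - j) * y ^ j
  else 0

lemma ff_zero (x y : R) {n k : ℕ} (h : n < k) : ff x y n k = 0 := by
  simp [ff, Nat.not_le.mpr h]

lemma ff_diag (x y : R) (n : ℕ) : ff x y n n = 1 := by
  simp [ff]

lemma ff_rec (x y : R) (n k : ℕ) :
    ff x y (n+1) k = x * ff x y n k +
      (if k ≤ n + 1 then ((n.choose (n+1-k) : R)) * y ^ (n+1-k) else 0) := by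
  rcases Nat.lt_or_ge (n+1) k with h | h
  · rw [ff_zero x y h, ff_zero x y (by omega), if_neg (by omega)]; ring
  rcases Nat.lt_or_ge n k with h2 | h2
  · have hk : k = n + 1 := by omega
    subst hk
    rw [ff_diag, ff_zero x y h2, if_pos le_rfl]
    simp
  · rw [if_pos h]
    rw [ff, ff, if_pos (by omega), if_pos h2]
    have e1 : n + 1 - k = (n - k) + 1 := by omega
    rw [e1, Finset.sum_range_succ, Finset.mul_sum]
    have e2 : (n - k + 1 + k - 1).choose (n - k + 1) = n.choose (n + 1 - k) := by
      congr 1 <;> omega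
    rw [e2]
    have e3 : n - k + 1 - (n - k + 1) = 0 := by omega
    rw [e3, pow_zero, mul_one]
    congr 1
    · apply Finset.sum_congr rfl
      intro j hj
      simp only [Finset.mem_range] at hj
      have : n - k + 1 - j = (n - k - j) + 1 := by omega
      rw [this, pow_succ]
      ring
    · rw [e1]

/-- Vandermonde with a guard making out-of-range terms explicitly zero. -/
lemma vand_guard (a b c : ℕ) :
    ∑ i ∈ Finset.range (a+1), (if i ≤ c then a.choose i * b.choose (c - i) else 0)
      = (a+b).choose c := by
  have h1 : (a+b).choose c = ∑ i ∈ Finset.range (c+1), a.choose i * b.choose (c - i) := by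
    rw [Nat.add_choose_eq, Finset.Nat.sum_antidiagonal_eq_sum_range_succ_mk]
  have h2 : ∑ i ∈ Finset.range (c+1), a.choose i * b.choose (c - i)
      = ∑ i ∈ Finset.range (c+1), (if i ≤ c then a.choose i * b.choose (c - i) else 0) := by
    apply Finset.sum_congr rfl
    intro i hi
    rw [if_pos (by simpa [Nat.lt_succ_iff] using hi)]
  have key : ∀ N, N ≤ a+c+2 → a + 1 ≤ N ∨ c + 1 ≤ N →
      ∑ i ∈ Finset.range N, (if i ≤ c then a.choose i * b.choose (c - i) else 0)
        = ∑ i ∈ Finset.range (a+c+2), (if i ≤ c then a.choose i * b.choose (c - i) else 0) := by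
    intro N hN hN2
    apply Finset.sum_subset (Finset.range_subset_range.mpr hN)
    intro i _ hi
    simp only [Finset.mem_range, not_lt] at hi
    rcases hN2 with h | h
    · split_ifs with hc
      · rw [Nat.choose_eq_zero_of_lt (by omega), zero_mul]
      · rfl
    · rw [if_neg (by omega)]
  rw [h1, h2]
  rw [key (c+1) (by omega) (Or.inr le_rfl), ← key (a+1) (by omega) (Or.inl le_rfl)]

lemma W1lem (n m : ℕ) :
    (n+m).choose m + ∑ k ∈ Finset.range (n+1),
        (if k+2 ≤ m+1 then n.choose k * m.choose (m-1-k) else 0)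
      = (n+m+1).choose m := by
  cases m with
  | zero => simp
  | succ s =>
    have : ∑ k ∈ Finset.range (n+1), (if k+2 ≤ s+1+1 then n.choose k * (s+1).choose (s+1-1-k) else 0)
        = ∑ k ∈ Finset.range (n+1), (if k ≤ s then n.choose k * (s+1).choose (s-k) else 0) := by
      apply Finset.sum_congr rfl
      intro k _
      have e : k + 2 ≤ s + 1 + 1 ↔ k ≤ s := by omega
      have e2 : s + 1 - 1 - k = s - k := by omega
      rw [e2]
      simp only [e]
    rw [this, vand_guard n (s+1) s]
    have : n + (s+1) + 1 = (n + s + 1) + 1 := by ring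
    rw [this]
    have : n + (s + 1) = n + s + 1 := by ring
    rw [this, Nat.choose_succ_succ' (n+s+1) s]
    omega

lemma key_s16 (x y : R) (n m : ℕ) :
    (∑ k ∈ Finset.range (n+1), y^(n+2+k) * ((n.choose (n-k)) : R) * ff x y m (k+2))
    - (∑ k ∈ Finset.range (n+1), y^(n+k) * ((n.choose (n-k)) : R) * ff x y m k)
    = (((m+n).choose (n+1) : R) - ((m+n).choose m : R)) * y^(m+n)
      + ∑ i ∈ Finset.range m,
          (((m+n-1-i).choose (n+1) : R) - ((m+n-1-i).choose n : R)) * x^(i+1) * y^(m+n-1-i) := by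
  induction m with
  | zero =>
    have h1 : ∑ k ∈ Finset.range (n+1), y^(n+2+k) * ((n.choose (n-k)) : R) * ff x y 0 (k+2) = 0 := by
      apply Finset.sum_eq_zero
      intro k _
      rw [ff_zero x y (by omega), mul_zero]
    have h2 : ∑ k ∈ Finset.range (n+1), y^(n+k) * ((n.choose (n-k)) : R) * ff x y 0 k
        = y^n := by
      rw [Finset.sum_eq_single 0]
      · simp [ff_diag]
      · intro k _ hk
        rw [ff_zero x y (by omega), mul_zero]
      · simp
    rw [h1, h2]
    simp [Nat.choose_succ_self]
  | succ m ih =>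
    -- abbreviations for the natural-number Vandermonde sums
    set W1 : ℕ := ∑ k ∈ Finset.range (n+1),
        (if k+2 ≤ m+1 then n.choose k * m.choose (m-1-k) else 0) with hW1
    set W2 : ℕ := ∑ k ∈ Finset.range (n+1),
        (if k ≤ m+1 then n.choose k * m.choose (m+1-k) else 0) with hW2
    have hA : ∑ k ∈ Finset.range (n+1), y^(n+2+k) * ((n.choose (n-k)) : R) * ff x y (m+1) (k+2)
        = x * (∑ k ∈ Finset.range (n+1), y^(n+2+k) * ((n.choose (n-k)) : R) * ff x y m (k+2))
          + (W1 : R) * y^(n+m+1) := by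
      have step : ∀ k ∈ Finset.range (n+1),
          y^(n+2+k) * ((n.choose (n-k)) : R) * ff x y (m+1) (k+2)
          = x * (y^(n+2+k) * ((n.choose (n-k)) : R) * ff x y m (k+2))
            + ((if k+2 ≤ m+1 then n.choose k * m.choose (m-1-k) else 0 : ℕ) : R) * y^(n+m+1) := by
        intro k hk
        simp only [Finset.mem_range] at hk
        have hkn : k ≤ n := by omega
        rw [ff_rec]
        rw [Nat.choose_symm hkn]
        split_ifs with h
        · have e1 : m + 1 - (k+2) = m-1-k := by omega
          rw [e1]
          have hy : y^(n+2+k) * y^(m-1-k) = y^(n+m+1) := by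
            rw [← pow_add]; congr 1; omega
          push_cast
          linear_combination ((n.choose k : R) * (m.choose (m-1-k))) * hy
        · push_cast
          ring
      rw [Finset.sum_congr rfl step, Finset.sum_add_distrib, ← Finset.mul_sum, ← Finset.sum_mul,
        ← Nat.cast_sum]
    have hB : ∑ k ∈ Finset.range (n+1), y^(n+k) * ((n.choose (n-k)) : R) * ff x y (m+1) k
        = x * (∑ k ∈ Finset.range (n+1), y^(n+k) * ((n.choose (n-k)) : R) * ff x y m k)
          + (W2 : R) * y^(n+m+1) := by
      have step : ∀ k ∈ Finset.range (n+1),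
          y^(n+k) * ((n.choose (n-k)) : R) * ff x y (m+1) k
          = x * (y^(n+k) * ((n.choose (n-k)) : R) * ff x y m k)
            + ((if k ≤ m+1 then n.choose k * m.choose (m+1-k) else 0 : ℕ) : R) * y^(n+m+1) := by
        intro k hk
        simp only [Finset.mem_range] at hk
        have hkn : k ≤ n := by omega
        rw [ff_rec]
        rw [Nat.choose_symm hkn]
        split_ifs with h
        · have hy : y^(n+k) * y^(m+1-k) = y^(n+m+1) := by
            rw [← pow_add]; congr 1; omega
          push_cast
          linear_combination ((n.choose k : R) * (m.choose (m+1-k))) * hy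
        · push_cast
          ring
      rw [Finset.sum_congr rfl step, Finset.sum_add_distrib, ← Finset.mul_sum, ← Finset.sum_mul,
        ← Nat.cast_sum]
    rw [hA, hB]
    have expand : x * (∑ k ∈ Finset.range (n+1), y^(n+2+k) * ((n.choose (n-k)) : R) * ff x y m (k+2))
          + (W1 : R) * y^(n+m+1)
        - (x * (∑ k ∈ Finset.range (n+1), y^(n+k) * ((n.choose (n-k)) : R) * ff x y m k)
          + (W2 : R) * y^(n+m+1))
        = x * ((∑ k ∈ Finset.range (n+1), y^(n+2+k) * ((n.choose (n-k)) : R) * ff x y m (k+2))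
            - ∑ k ∈ Finset.range (n+1), y^(n+k) * ((n.choose (n-k)) : R) * ff x y m k)
          + ((W1 : R) - W2) * y^(n+m+1) := by ring
    rw [expand, ih]
    -- now manipulate the RHS for m+1
    have hsum : ∑ i ∈ Finset.range (m+1),
          (((m+1+n-1-i).choose (n+1) : R) - ((m+1+n-1-i).choose n : R)) * x^(i+1) * y^(m+1+n-1-i)
        = x * (∑ i ∈ Finset.range m,
            (((m+n-1-i).choose (n+1) : R) - ((m+n-1-i).choose n : R)) * x^(i+1) * y^(m+n-1-i))
          + (((m+n).choose (n+1) : R) - ((m+n).choose n : R)) * x * y^(m+n) := by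
      rw [Finset.sum_range_succ']
      congr 1
      · rw [Finset.mul_sum]
        apply Finset.sum_congr rfl
        intro i hi
        simp only [Finset.mem_range] at hi
        have e : m+1+n-1-(i+1) = m+n-1-i := by omega
        rw [e]
        ring
      · have e : m+1+n-1-0 = m+n := by omega
        rw [e]
        ring
    rw [hsum]
    -- scalar facts
    have Rh1 : (((m+n).choose n : R)) = ((m+n).choose m : R) := by
      have := Nat.choose_symm (by omega : m ≤ m+n)
      have e : m + n - m = n := by omega
      rw [e] at this
      exact_mod_cast congrArg (Nat.cast : ℕ → R) this
    have Rh2 : (((m+1+n).choose (m+1) : R)) = ((m+n).choose m : R) + ((m+n).choose (m+1) : R) := by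
      have := Nat.choose_succ_succ' (m+n) m
      have e : m + 1 + n = m + n + 1 := by omega
      rw [e]
      exact_mod_cast congrArg (Nat.cast : ℕ → R) this
    have Rh3 : (((m+1+n).choose (n+1) : R)) = ((m+n+1).choose m : R) := by
      have := (Nat.choose_symm (by omega : n+1 ≤ m+n+1)).symm
      have e : m + n + 1 - (n+1) = m := by omega
      rw [e] at this
      have e2 : m + 1 + n = m + n + 1 := by omega
      rw [e2]
      exact_mod_cast congrArg (Nat.cast : ℕ → R) this
    have Rh4 : ((m+n).choose m : R) + (W1 : R) = ((m+n+1).choose m : R) := by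
      have := W1lem n m
      rw [Nat.add_comm n m] at this
      exact_mod_cast congrArg (Nat.cast : ℕ → R) this
    have Rh5 : (W2 : R) = ((m+n).choose (m+1) : R) := by
      have := vand_guard n m (m+1)
      rw [Nat.add_comm n m] at this
      rw [hW2]
      exact_mod_cast congrArg (Nat.cast : ℕ → R) this
    linear_combination x*y^(m+n)*Rh1 + y^(m+n+1)*(Rh4 - Rh5 - Rh3 + Rh2)

lemma Trange (x y : R) (m n : ℕ) :
    ∑ k ∈ Finset.Icc 1 (max m n),
        (((m+n-k).choose n : R) - ((m+n-k).choose m : R)) * x^(k-1) * y^(m+n-k)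
    = ∑ i ∈ Finset.range (m+n),
        (((m+n-1-i).choose n : R) - ((m+n-1-i).choose m : R)) * x^i * y^(m+n-1-i) := by
  have h1 : ∑ k ∈ Finset.Icc 1 (max m n),
        (((m+n-k).choose n : R) - ((m+n-k).choose m : R)) * x^(k-1) * y^(m+n-k)
      = ∑ k ∈ Finset.Icc 1 (m+n),
        (((m+n-k).choose n : R) - ((m+n-k).choose m : R)) * x^(k-1) * y^(m+n-k) := by
    apply Finset.sum_subset (Finset.Icc_subset_Icc_right (by omega : max m n ≤ m+n))
    intro k hk hk2
    simp only [Finset.mem_Icc] at hk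
    simp only [Finset.mem_Icc, not_and, not_le] at hk2
    have hmax : max m n < k := hk2 hk.1
    rw [Nat.choose_eq_zero_of_lt (by omega), Nat.choose_eq_zero_of_lt (by omega)]
    simp
  rw [h1, ← Finset.Ico_add_one_right_eq_Icc, Finset.sum_Ico_eq_sum_range]
  have er : m + n + 1 - 1 = m + n := by omega
  rw [er]
  apply Finset.sum_congr rfl
  intro i hi
  simp only [Finset.mem_range] at hi
  have e1 : m + n - (1 + i) = m + n - 1 - i := by omega
  have e2 : 1 + i - 1 = i := by omega
  rw [e1, e2]

lemma Tstep (x y : R) (m n : ℕ) :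
    ∑ k ∈ Finset.Icc 1 (max m (n+1)),
        (((m+(n+1)-k).choose (n+1) : R) - ((m+(n+1)-k).choose m : R)) * x^(k-1) * y^(m+(n+1)-k)
    = x * (∑ k ∈ Finset.Icc 1 (max m n),
          (((m+n-k).choose n : R) - ((m+n-k).choose m : R)) * x^(k-1) * y^(m+n-k))
      + ((((m+n).choose (n+1) : R) - ((m+n).choose m : R)) * y^(m+n)
        + ∑ i ∈ Finset.range m,
            (((m+n-1-i).choose (n+1) : R) - ((m+n-1-i).choose n : R)) * x^(i+1) * y^(m+n-1-i)) := by
  rw [Trange x y m (n+1), Trange x y m n]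
  have e0 : m + (n+1) = (m+n) + 1 := by omega
  rw [e0, Finset.sum_range_succ']
  have hL : (∑ i ∈ Finset.range (m+n),
        (((m+n+1-1-(i+1)).choose (n+1) : R) - ((m+n+1-1-(i+1)).choose m : R)) * x^(i+1)
          * y^(m+n+1-1-(i+1)))
      = ∑ i ∈ Finset.range (m+n),
        (((m+n-1-i).choose (n+1) : R) - ((m+n-1-i).choose m : R)) * x^(i+1) * y^(m+n-1-i) := by
    apply Finset.sum_congr rfl
    intro i hi
    have e : m+n+1-1-(i+1) = m+n-1-i := by omega
    rw [e]
  have h0 : (((m+n+1-1-0).choose (n+1) : R) - ((m+n+1-1-0).choose m : R)) * x^(0:ℕ)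
        * y^(m+n+1-1-0)
      = (((m+n).choose (n+1) : R) - ((m+n).choose m : R)) * y^(m+n) := by
    have e : m+n+1-1-0 = m+n := by omega
    rw [e]
    ring
  have hx : x * ∑ i ∈ Finset.range (m+n),
        (((m+n-1-i).choose n : R) - ((m+n-1-i).choose m : R)) * x^i * y^(m+n-1-i)
      = ∑ i ∈ Finset.range (m+n),
        (((m+n-1-i).choose n : R) - ((m+n-1-i).choose m : R)) * x^(i+1) * y^(m+n-1-i) := by
    rw [Finset.mul_sum]
    exact Finset.sum_congr rfl (by intros; ring)
  have hcomb : ∑ i ∈ Finset.range (m+n),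
        (((m+n-1-i).choose (n+1) : R) - ((m+n-1-i).choose m : R)) * x^(i+1) * y^(m+n-1-i)
      = (∑ i ∈ Finset.range (m+n),
          (((m+n-1-i).choose n : R) - ((m+n-1-i).choose m : R)) * x^(i+1) * y^(m+n-1-i))
        + ∑ i ∈ Finset.range (m+n),
          (((m+n-1-i).choose (n+1) : R) - ((m+n-1-i).choose n : R)) * x^(i+1) * y^(m+n-1-i) := by
    rw [← Finset.sum_add_distrib]
    exact Finset.sum_congr rfl (by intros; ring)
  have hres : ∑ i ∈ Finset.range m,
        (((m+n-1-i).choose (n+1) : R) - ((m+n-1-i).choose n : R)) * x^(i+1) * y^(m+n-1-i)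
      = ∑ i ∈ Finset.range (m+n),
        (((m+n-1-i).choose (n+1) : R) - ((m+n-1-i).choose n : R)) * x^(i+1) * y^(m+n-1-i) := by
    apply Finset.sum_subset (Finset.range_subset_range.mpr (by omega))
    intro i hi hi2
    simp only [Finset.mem_range, not_lt] at hi hi2
    rw [Nat.choose_eq_zero_of_lt (by omega), Nat.choose_eq_zero_of_lt (by omega)]
    simp
  linear_combination hL + h0 + hcomb - hx - hres

lemma Sext (x y : R) (m n N : ℕ) (h : min m n + 1 ≤ N) :
    ∑ k ∈ Finset.range (min m n + 1),
        y^(2*k) * (ff x y n k * ff x y m (k+1) - ff x y n (k+1) * ff x y m k)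
    = ∑ k ∈ Finset.range N,
        y^(2*k) * (ff x y n k * ff x y m (k+1) - ff x y n (k+1) * ff x y m k) := by
  apply Finset.sum_subset (Finset.range_subset_range.mpr h)
  intro k _ hk
  simp only [Finset.mem_range, not_lt] at hk
  rcases le_or_gt k n with h1 | h1
  · have hm : m < k := by omega
    rw [ff_zero x y (by omega : m < k+1), ff_zero x y hm]
    ring
  · rw [ff_zero x y h1, ff_zero x y (by omega : n < k+1)]
    ring

theorem main_general (x y : R) (m n : ℕ) :
    ∑ k ∈ Finset.range (min m n + 1),
        y^(2*k) * (ff x y n k * ff x y m (k+1) - ff x y n (k+1) * ff x y m k)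
    = ∑ k ∈ Finset.Icc 1 (max m n),
        (((m+n-k).choose n : R) - ((m+n-k).choose m : R)) * x^(k-1) * y^(m+n-k) := by
  induction n with
  | zero =>
    rw [Sext x y m 0 1 (by omega)]
    rw [Finset.sum_range_one]
    rw [ff_diag, ff_zero x y (by omega : (0:ℕ) < 0+1)]
    rcases Nat.eq_zero_or_pos m with hm | hm
    · subst hm
      simp [ff_zero x y (by omega : (0:ℕ) < 1)]
    · have hmax : max m 0 = m := by omega
      rw [hmax]
      have hlhs : y^(2*0) * (1 * ff x y m (0+1) - 0 * ff x y m 0) = ff x y m 1 := by ring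
      rw [hlhs]
      have hffm1 : ff x y m 1 = ∑ j ∈ Finset.range m, x^(m-1-j) * y^j := by
        rw [ff, if_pos (by omega : 1 ≤ m)]
        have e : m - 1 + 1 = m := by omega
        rw [e]
        apply Finset.sum_congr rfl
        intro j _
        have e2 : j + 1 - 1 = j := by omega
        rw [e2, Nat.choose_self]
        push_cast
        ring
      rw [hffm1]
      have hrhs : ∑ k ∈ Finset.Icc 1 m,
            (((m+0-k).choose 0 : R) - ((m+0-k).choose m : R)) * x^(k-1) * y^(m+0-k)
          = ∑ i ∈ Finset.range m, x^i * y^(m-1-i) := by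
        rw [← Finset.Ico_add_one_right_eq_Icc, Finset.sum_Ico_eq_sum_range]
        have er : m + 1 - 1 = m := by omega
        rw [er]
        apply Finset.sum_congr rfl
        intro i hi
        simp only [Finset.mem_range] at hi
        have e1 : m + 0 - (1+i) = m - 1 - i := by omega
        have e2 : 1 + i - 1 = i := by omega
        rw [e1, e2, Nat.choose_zero_right, Nat.choose_eq_zero_of_lt (by omega)]
        push_cast
        ring
      rw [hrhs]
      have := Finset.sum_range_reflect (fun j => x^j * y^(m-1-j)) m
      rw [← this]
      apply Finset.sum_congr rfl
      intro j hj
      simp only [Finset.mem_range] at hj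
      have e : m - 1 - (m-1-j) = j := by omega
      rw [e]
  | succ n ih =>
    have h0 := Sext x y m (n+1) (n+3) (by omega)
    have hsplit := Finset.sum_range_succ
      (fun k => y^(2*k) * (ff x y (n+1) k * ff x y m (k+1) - ff x y (n+1) (k+1) * ff x y m k)) (n+2)
    have hsplit2 := Finset.sum_range_succ
      (fun k => y^(2*k) * (ff x y (n+1) k * ff x y m (k+1) - ff x y (n+1) (k+1) * ff x y m k)) (n+1)
    have hT1 : y^(2*(n+1)) * (ff x y (n+1) (n+1) * ff x y m (n+1+1)
          - ff x y (n+1) (n+1+1) * ff x y m (n+1))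
        = y^(2*(n+1)) * ff x y m (n+2) := by
      rw [ff_diag, ff_zero x y (by omega : n+1 < n+1+1)]
      ring
    have hT2 : y^(2*(n+2)) * (ff x y (n+1) (n+2) * ff x y m (n+2+1)
          - ff x y (n+1) (n+2+1) * ff x y m (n+2)) = 0 := by
      rw [ff_zero x y (by omega : n+1 < n+2), ff_zero x y (by omega : n+1 < n+2+1)]
      ring
    have hmain : ∑ k ∈ Finset.range (n+1),
          y^(2*k) * (ff x y (n+1) k * ff x y m (k+1) - ff x y (n+1) (k+1) * ff x y m k)
        = x * (∑ k ∈ Finset.range (n+1),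
            y^(2*k) * (ff x y n k * ff x y m (k+1) - ff x y n (k+1) * ff x y m k))
          + ((∑ k ∈ Finset.range (n+1), y^(n+1+k) * ((n.choose (n+1-k)) : R) * ff x y m (k+1))
          - ∑ k ∈ Finset.range (n+1), y^(n+k) * ((n.choose (n-k)) : R) * ff x y m k) := by
      have pt : ∀ k ∈ Finset.range (n+1),
          y^(2*k) * (ff x y (n+1) k * ff x y m (k+1) - ff x y (n+1) (k+1) * ff x y m k)
          = x * (y^(2*k) * (ff x y n k * ff x y m (k+1) - ff x y n (k+1) * ff x y m k))
            + (y^(n+1+k) * ((n.choose (n+1-k)) : R) * ff x y m (k+1)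
            - y^(n+k) * ((n.choose (n-k)) : R) * ff x y m k) := by
        intro k hk
        simp only [Finset.mem_range] at hk
        rw [ff_rec x y n k, ff_rec x y n (k+1),
          if_pos (by omega : k ≤ n+1), if_pos (by omega : k+1 ≤ n+1)]
        have e : n+1-(k+1) = n-k := by omega
        rw [e]
        have hy1 : y^(2*k) * y^(n+1-k) = y^(n+1+k) := by
          rw [← pow_add]; congr 1; omega
        have hy2 : y^(2*k) * y^(n-k) = y^(n+k) := by
          rw [← pow_add]; congr 1; omega
        linear_combination (((n.choose (n+1-k)) : R) * ff x y m (k+1)) * hy1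
          - (((n.choose (n-k)) : R) * ff x y m k) * hy2
      rw [Finset.sum_congr rfl pt, Finset.sum_add_distrib, ← Finset.mul_sum]
      congr 1
      rw [Finset.sum_sub_distrib]
    have hA2 : (∑ k ∈ Finset.range (n+1), y^(n+1+k) * ((n.choose (n+1-k)) : R) * ff x y m (k+1))
          + y^(2*(n+1)) * ff x y m (n+2)
        = ∑ k ∈ Finset.range (n+1), y^(n+2+k) * ((n.choose (n-k)) : R) * ff x y m (k+2) := by
      have h1 : (∑ k ∈ Finset.range (n+1), y^(n+1+k) * ((n.choose (n+1-k)) : R) * ff x y m (k+1))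
            + y^(2*(n+1)) * ff x y m (n+2)
          = ∑ k ∈ Finset.range (n+2), y^(n+1+k) * ((n.choose (n+1-k)) : R) * ff x y m (k+1) := by
        conv_rhs => rw [Finset.sum_range_succ]
        congr 1
        have e1 : n+1-(n+1) = 0 := by omega
        rw [e1, Nat.choose_zero_right]
        have e2 : n+1+(n+1) = 2*(n+1) := by ring
        rw [e2]
        push_cast
        ring
      rw [h1, Finset.sum_range_succ']
      have h2 : ∀ k ∈ Finset.range (n+1),
          y^(n+1+(k+1)) * ((n.choose (n+1-(k+1))) : R) * ff x y m (k+1+1)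
          = y^(n+2+k) * ((n.choose (n-k)) : R) * ff x y m (k+2) := by
        intro k _
        have e1 : n+1+(k+1) = n+2+k := by omega
        have e2 : n+1-(k+1) = n-k := by omega
        have e3 : k+1+1 = k+2 := by omega
        rw [e1, e2, e3]
      rw [Finset.sum_congr rfl h2]
      have h3 : y^(n+1+0) * ((n.choose (n+1-0)) : R) * ff x y m (0+1) = 0 := by
        have e : n+1-0 = n+1 := by omega
        rw [e, Nat.choose_succ_self]
        push_cast
        ring
      rw [h3, add_zero]
    have hS' : ∑ k ∈ Finset.range (n+1),
          y^(2*k) * (ff x y n k * ff x y m (k+1) - ff x y n (k+1) * ff x y m k)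
        = ∑ k ∈ Finset.Icc 1 (max m n),
          (((m+n-k).choose n : R) - ((m+n-k).choose m : R)) * x^(k-1) * y^(m+n-k) :=
      (Sext x y m n (n+1) (by omega)).symm.trans ih
    have keyh := key_s16 x y n m
    have Tst := Tstep x y m n
    rw [h0, hsplit, hsplit2]
    linear_combination hT1 + hT2 + hmain + hA2 + x * hS' + keyh - Tst

/-- The entries of the recursive matrix for `σ = (x,y,y,…)`, `τ = (0,0,0,…)`, as
polynomials in `x = X 0`, `y = X 1`. -/
noncomputable def Mexp (n k : ℕ) : MvPolynomial (Fin 2) ℤ :=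
  if k ≤ n then
    ∑ j ∈ Finset.range (n - k + 1),
      ((j + k - 1).choose j : MvPolynomial (Fin 2) ℤ)
        * MvPolynomial.X 0 ^ (n - k - j) * MvPolynomial.X 1 ^ j
  else 0

/-- Theorem 4.2: weighted sums of 2×2 minors of the triangle `M_{n,k}`. -/
theorem stmt16 (m n : ℕ) :
    ∑ k ∈ Finset.range (min m n + 1),
        MvPolynomial.X 1 ^ (2 * k) * (Mexp n k * Mexp m (k + 1) - Mexp n (k + 1) * Mexp m k)
      = ∑ k ∈ Finset.Icc 1 (max m n),
          (((m + n - k).choose n : MvPolynomial (Fin 2) ℤ) - ((m + n - k).choose m : MvPolynomial (Fin 2) ℤ))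
            * MvPolynomial.X 0 ^ (k - 1) * MvPolynomial.X 1 ^ (m + n - k) := by
  have hM : ∀ n k, Mexp n k = ff (MvPolynomial.X 0 : MvPolynomial (Fin 2) ℤ) (MvPolynomial.X 1) n k :=
    fun _ _ => rfl
  simp only [hM]
  exact main_general _ _ m n
end

section
/- Let M_{n,k} be the triangle with M_{0,0}=1, M_{n,0} = x M_{n-1,0}, and M_{n,k} = M_{n-1,k-1} + y M_{n-1,k}. Then for all n ≥ 0: ∑_{k=0}^{n} y^{2k} (M_{n,k} M_{n+1,k+1} − M_{n,k+1} M_{n+1,k}) = ∑_{k=0}^{n} C_{n,k} x^k y^{2n−k}, where C_{n,k} = ((k+1)/(n+1)) C(2n−k, n) are the ballot numbers. -/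
open Finset MvPolynomial

private lemma vdm1 (n m : ℕ) :
    ∑ k ∈ range (m + 1), n.choose (k + 1) * m.choose k = (n + m).choose (m + 1) := by
  have hv := Nat.add_choose_eq n m (m + 1)
  rw [Finset.Nat.sum_antidiagonal_eq_sum_range_succ_mk] at hv
  rw [hv]
  conv_rhs => rw [Finset.sum_range_succ']
  simp only [Nat.sub_zero, Nat.choose_zero_right, Nat.choose_succ_self, Nat.mul_zero,
    Nat.add_zero, Nat.one_mul, Nat.zero_add]
  apply Finset.sum_congr rfl
  intro k hk
  have hk' : k ≤ m := by simpa [Nat.lt_succ_iff] using hk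
  rw [show m + 1 - (k + 1) = m - k from by omega, Nat.choose_symm hk']

private lemma vdm2 (n m : ℕ) :
    ∑ k ∈ range (m + 2), n.choose k * (m + 1).choose (k + 1) = (n + (m + 1)).choose m := by
  have hv := Nat.add_choose_eq n (m + 1) m
  rw [Finset.Nat.sum_antidiagonal_eq_sum_range_succ_mk] at hv
  rw [hv, Finset.sum_range_succ]
  have h0 : (m + 1).choose (m + 1 + 1) = 0 := Nat.choose_succ_self _
  rw [h0, Nat.mul_zero, Nat.add_zero]
  symm
  apply Finset.sum_congr rfl
  intro k hk
  have hk' : k < m + 1 := by simpa using hk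
  rw [show (m + 1).choose (k + 1) = (m + 1).choose (m + 1 - (k + 1)) from
    (Nat.choose_symm (by omega)).symm, show m + 1 - (k + 1) = m - k from by omega]

private lemma coeffsum (n j : ℕ) (hj : j < n) :
    ∑ k ∈ range (n - j),
        ((n.choose (k + 1) : ℚ) * ((n - 1 - j).choose k : ℚ)
          - (n.choose k : ℚ) * ((n - 1 - j).choose (k + 1) : ℚ))
      = ((j : ℚ) + 1) / ((n : ℚ) + 1) * ((2 * n - j).choose n : ℚ) := by
  obtain ⟨m, rfl⟩ : ∃ m, n = j + m + 1 := ⟨n - j - 1, by omega⟩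
  rw [show j + m + 1 - j = m + 1 from by omega, show j + m + 1 - 1 - j = m from by omega,
    show 2 * (j + m + 1) - j = (j + m + 1) + m + 1 from by omega]
  rw [Finset.sum_sub_distrib]
  have e1 : ∑ k ∈ range (m + 1), ((j + m + 1).choose (k + 1) : ℚ) * ((m).choose k : ℚ)
      = (((j + m + 1) + m).choose (m + 1) : ℚ) := by
    rw [← vdm1 (j + m + 1) m]; push_cast; rfl
  rw [e1]
  rcases m with _ | m
  · simp only [Nat.add_zero, Nat.zero_add, Finset.sum_range_one, Nat.choose_zero_right,
      Nat.choose_one_right, Nat.choose_succ_self, Nat.cast_zero, Nat.cast_one]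
    rw [Nat.choose_succ_self_right]
    have : ((j : ℚ) + 1) + 1 ≠ 0 := by positivity
    push_cast
    field_simp
    ring
  · have e2 : ∑ k ∈ range (m + 2), ((j + (m + 1) + 1).choose k : ℚ) * ((m + 1).choose (k + 1) : ℚ)
        = (((j + (m + 1) + 1) + (m + 1)).choose m : ℚ) := by
      rw [← vdm2 (j + (m + 1) + 1) m]
      push_cast; rfl
    rw [e2]
    have hA1 : (m + 1 + 1 : ℕ) ≤ j + (m + 1) + 1 + (m + 1) := by omega
    have hA2 : (m : ℕ) ≤ j + (m + 1) + 1 + (m + 1) := by omega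
    have hA3 : (j + (m + 1) + 1 : ℕ) ≤ j + (m + 1) + 1 + (m + 1) + 1 := by omega
    rw [Nat.cast_choose ℚ hA1, Nat.cast_choose ℚ hA2, Nat.cast_choose ℚ hA3]
    rw [show j + (m + 1) + 1 + (m + 1) - (m + 1 + 1) = j + m + 1 from by omega,
      show j + (m + 1) + 1 + (m + 1) - m = j + m + 3 from by omega,
      show j + (m + 1) + 1 + (m + 1) + 1 - (j + (m + 1) + 1) = m + 1 + 1 from by omega]
    rw [show (j + (m + 1) + 1 + (m + 1) + 1) = (j + 2 * m + 3) + 1 from by omega,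
      show (j + (m + 1) + 1 + (m + 1)) = (j + 2 * m + 3) from by omega,
      show (j + (m + 1) + 1) = (j + m + 2) from by omega]
    have f1 : ((m + 1 + 1).factorial : ℚ) = ((m : ℚ) + 2) * ((m : ℚ) + 1) * (m.factorial : ℚ) := by
      rw [Nat.factorial_succ, Nat.factorial_succ]; push_cast; ring
    have f2 : ((j + m + 3).factorial : ℚ)
        = ((j : ℚ) + m + 3) * ((j : ℚ) + m + 2) * ((j + m + 1).factorial : ℚ) := by
      rw [show j + m + 3 = (j + m + 2) + 1 from rfl, Nat.factorial_succ,
        show j + m + 2 = (j + m + 1) + 1 from rfl, Nat.factorial_succ]; push_cast; ring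
    have f3 : ((j + m + 2).factorial : ℚ)
        = ((j : ℚ) + m + 2) * ((j + m + 1).factorial : ℚ) := by
      rw [show j + m + 2 = (j + m + 1) + 1 from rfl, Nat.factorial_succ]; push_cast; ring
    have f4 : (((j + 2 * m + 3) + 1).factorial : ℚ)
        = ((j : ℚ) + 2 * m + 4) * ((j + 2 * m + 3).factorial : ℚ) := by
      rw [Nat.factorial_succ]; push_cast; ring
    rw [f1, f2, f3, f4]
    have n1 : ((j + 2 * m + 3).factorial : ℚ) ≠ 0 := by positivity
    have n2 : ((j + m + 1).factorial : ℚ) ≠ 0 := by positivity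
    have n3 : ((m).factorial : ℚ) ≠ 0 := by positivity
    push_cast
    field_simp
    ring

section Mlemmas

variable (M : ℕ → ℕ → MvPolynomial (Fin 2) ℚ)
    (h00 : M 0 0 = 1) (htop : ∀ n k, n < k → M n k = 0)
    (h0 : ∀ n, M (n + 1) 0 = MvPolynomial.X 0 * M n 0)
    (h : ∀ n k, M (n + 1) (k + 1) = M n k + MvPolynomial.X 1 * M n (k + 1))

include h00 h0 in
private lemma Mzero : ∀ n, M n 0 = (X 0 : MvPolynomial (Fin 2) ℚ) ^ n := by
  intro n
  induction n with
  | zero => simpa using h00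
  | succ n ih => rw [h0 n, ih, pow_succ]; ring

include h00 htop h in
private lemma Mdiag : ∀ n, M n n = 1 := by
  intro n
  induction n with
  | zero => exact h00
  | succ n ih => rw [h n n, htop n (n + 1) (by omega), ih, mul_zero, add_zero]

include h00 htop h0 h in
private lemma Mstep : ∀ n k, (X 0 - X 1 : MvPolynomial (Fin 2) ℚ) * M n (k + 1)
    = M n k - C ((n.choose k : ℚ)) * X 1 ^ (n - k) := by
  intro n
  induction n with
  | zero =>
    intro k
    rw [htop 0 (k + 1) (by omega), mul_zero]
    rcases k with _ | k
    · rw [h00, Nat.choose_self]; simp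
    · rw [htop 0 (k + 1) (by omega), Nat.choose_eq_zero_of_lt (by omega)]; simp
  | succ n ih =>
    intro k
    rcases k with _ | k
    · have e := ih 0
      rw [Mzero M h00 h0] at e
      simp only [Nat.choose_zero_right, Nat.cast_one, map_one, one_mul, Nat.sub_zero] at e ⊢
      rw [h n 0, h0 n, Mzero M h00 h0]
      linear_combination (X 1 : MvPolynomial (Fin 2) ℚ) * e
    · by_cases hk : k + 1 ≤ n
      · have e1 := ih k
        have e2 := ih (k + 1)
        rw [h n (k + 1), h n k]
        have hc : (((n + 1).choose (k + 1) : ℚ)) = (n.choose k : ℚ) + (n.choose (k + 1) : ℚ) := by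
          rw [Nat.choose_succ_succ]; push_cast; ring
        rw [hc, map_add, Nat.succ_sub_succ]
        have hy : (X 1 : MvPolynomial (Fin 2) ℚ) ^ (n - k) = X 1 * X 1 ^ (n - (k + 1)) := by
          rw [← pow_succ']
          congr 1
          omega
        linear_combination e1 + (X 1 : MvPolynomial (Fin 2) ℚ) * e2
          + C ((n.choose (k + 1) : ℚ)) * hy
      · by_cases hnk : n = k
        · subst hnk
          rw [htop (n + 1) (n + 1 + 1) (by omega), Mdiag M h00 htop h (n + 1),
            Nat.choose_self, Nat.succ_sub_succ, Nat.sub_self]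
          simp
        · rw [htop (n + 1) (k + 1 + 1) (by omega), htop (n + 1) (k + 1) (by omega),
            Nat.choose_eq_zero_of_lt (by omega)]
          simp

include h00 htop h0 h in
private lemma Mform : ∀ n k, M n (k + 1)
    = ∑ j ∈ range (n - k), C (((n - 1 - j).choose k : ℚ)) * X 0 ^ j * X 1 ^ (n - k - 1 - j) := by
  intro n
  induction n with
  | zero =>
    intro k
    rw [htop 0 (k + 1) (by omega), Nat.zero_sub, Finset.range_zero, Finset.sum_empty]
  | succ n ih =>
    intro k
    rcases k with _ | k
    · -- k = 0
      rw [h n 0, Mzero M h00 h0, ih 0]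
      simp only [Nat.sub_zero, Nat.choose_zero_right, Nat.cast_one, map_one, one_mul,
        Nat.add_sub_cancel]
      rw [Finset.sum_range_succ, Finset.mul_sum, Nat.sub_self, pow_zero, mul_one]
      rw [add_comm]
      congr 1
      apply Finset.sum_congr rfl
      intro j hj
      have hj' : j < n := by simpa using hj
      have hy : (X 1 : MvPolynomial (Fin 2) ℚ) * X 1 ^ (n - 1 - j) = X 1 ^ (n - j) := by
        rw [← pow_succ']
        congr 1
        omega
      linear_combination (X 0 : MvPolynomial (Fin 2) ℚ) ^ j * hy
    · -- k+1
      by_cases hk : k + 1 ≤ n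
      · rw [h n (k + 1), ih k, ih (k + 1)]
        simp only [Nat.succ_sub_succ, Nat.add_sub_cancel, Nat.sub_zero]
        have hpad : (X 1 : MvPolynomial (Fin 2) ℚ) *
            ∑ j ∈ range (n - (k + 1)), C (((n - 1 - j).choose (k + 1) : ℚ)) * X 0 ^ j
              * X 1 ^ (n - (k + 1) - 1 - j)
            = ∑ j ∈ range (n - k), C (((n - 1 - j).choose (k + 1) : ℚ)) * X 0 ^ j
              * X 1 ^ (n - k - 1 - j) := by
          rw [Finset.mul_sum]
          rw [show n - k = (n - (k + 1)) + 1 from by omega, Finset.sum_range_succ]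
          have hz : n - 1 - (n - (k + 1)) = k := by omega
          rw [hz, Nat.choose_succ_self, Nat.cast_zero, map_zero, zero_mul, zero_mul, add_zero]
          apply Finset.sum_congr rfl
          intro j hj
          have hj' : j < n - (k + 1) := by simpa using hj
          have hy : (X 1 : MvPolynomial (Fin 2) ℚ) * X 1 ^ (n - (k + 1) - 1 - j)
              = X 1 ^ (n - (k + 1) + 1 - 1 - j) := by
            rw [← pow_succ']
            congr 1
            omega
          linear_combination (C (((n - 1 - j).choose (k + 1) : ℚ)) * X 0 ^ j) * hy
        rw [hpad, ← Finset.sum_add_distrib]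
        apply Finset.sum_congr rfl
        intro j hj
        have hj' : j < n - k := by simpa using hj
        have hc : ((n - j).choose (k + 1) : ℚ)
            = ((n - 1 - j).choose k : ℚ) + ((n - 1 - j).choose (k + 1) : ℚ) := by
          rw [show n - j = (n - 1 - j) + 1 from by omega, Nat.choose_succ_succ]
          push_cast; ring
        rw [hc, map_add]
        ring
      · rw [htop (n + 1) (k + 1 + 1) (by omega),
          show n + 1 - (k + 1) = 0 from by omega, Finset.range_zero, Finset.sum_empty]

include h00 htop h0 h in
private lemma Dterm (n k : ℕ) :
    M n (k + 1) * M (n + 1) (k + 1 + 1) - M n (k + 1 + 1) * M (n + 1) (k + 1)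
      = C ((n.choose (k + 1) : ℚ)) * X 1 ^ (n - (k + 1)) * M n (k + 1)
        - C ((n.choose k : ℚ)) * X 1 ^ (n - k) * M n (k + 1 + 1) := by
  rw [h n (k + 1), h n k]
  linear_combination (M n (k + 1 + 1)) * Mstep M h00 htop h0 h n k
    - (M n (k + 1)) * Mstep M h00 htop h0 h n (k + 1)

include h00 htop h0 h in
private lemma D0 (n : ℕ) :
    M n 0 * M (n + 1) 1 - M n 1 * M (n + 1) 0 = X 0 ^ n * X 1 ^ n := by
  have e := Mstep M h00 htop h0 h n 0
  rw [Mzero M h00 h0] at e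
  simp only [Nat.choose_zero_right, Nat.cast_one, map_one, one_mul, Nat.sub_zero] at e
  rw [h n 0, h0 n, Mzero M h00 h0]
  linear_combination (-(X 0 ^ n : MvPolynomial (Fin 2) ℚ)) * e

include h00 htop h0 h in
private lemma texp (n k : ℕ) (hk : k < n) :
    X 1 ^ (2 * (k + 1)) * (C ((n.choose (k + 1) : ℚ)) * X 1 ^ (n - (k + 1)) * M n (k + 1)
        - C ((n.choose k : ℚ)) * X 1 ^ (n - k) * M n (k + 1 + 1))
      = ∑ j ∈ range (n - k),
          C ((n.choose (k + 1) : ℚ) * ((n - 1 - j).choose k : ℚ)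
            - (n.choose k : ℚ) * ((n - 1 - j).choose (k + 1) : ℚ))
            * X 0 ^ j * X 1 ^ (2 * n - j) := by
  have hs1 : X 1 ^ (2 * (k + 1)) * (C ((n.choose (k + 1) : ℚ)) * X 1 ^ (n - (k + 1)) * M n (k + 1))
      = ∑ j ∈ range (n - k),
          C ((n.choose (k + 1) : ℚ)) * C (((n - 1 - j).choose k : ℚ)) * X 0 ^ j
            * X 1 ^ (2 * n - j) := by
    rw [Mform M h00 htop h0 h n k, Finset.mul_sum, Finset.mul_sum]
    apply Finset.sum_congr rfl
    intro j hj
    have hj' : j < n - k := by simpa using hj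
    have hy : (X 1 : MvPolynomial (Fin 2) ℚ) ^ (2 * (k + 1))
        * (X 1 ^ (n - (k + 1)) * X 1 ^ (n - k - 1 - j)) = X 1 ^ (2 * n - j) := by
      rw [← pow_add, ← pow_add]
      congr 1
      omega
    linear_combination (C ((n.choose (k + 1) : ℚ)) * C (((n - 1 - j).choose k : ℚ))
      * X 0 ^ j) * hy
  have hs2 : X 1 ^ (2 * (k + 1)) * (C ((n.choose k : ℚ)) * X 1 ^ (n - k) * M n (k + 1 + 1))
      = ∑ j ∈ range (n - k),
          C ((n.choose k : ℚ)) * C (((n - 1 - j).choose (k + 1) : ℚ)) * X 0 ^ j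
            * X 1 ^ (2 * n - j) := by
    rw [Mform M h00 htop h0 h n (k + 1), Finset.mul_sum, Finset.mul_sum]
    rw [show n - k = (n - (k + 1)) + 1 from by omega]
    rw [Finset.sum_range_succ, show n - 1 - (n - (k + 1)) = k from by omega,
      Nat.choose_succ_self, Nat.cast_zero, map_zero, mul_zero, zero_mul, zero_mul, add_zero]
    apply Finset.sum_congr rfl
    intro j hj
    have hj' : j < n - (k + 1) := by simpa using hj
    have hy : (X 1 : MvPolynomial (Fin 2) ℚ) ^ (2 * (k + 1))
        * (X 1 ^ (n - (k + 1) + 1) * X 1 ^ (n - (k + 1) - 1 - j)) = X 1 ^ (2 * n - j) := by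
      rw [← pow_add, ← pow_add]
      congr 1
      omega
    linear_combination (C ((n.choose k : ℚ)) * C (((n - 1 - j).choose (k + 1) : ℚ))
      * X 0 ^ j) * hy
  rw [mul_sub, hs1, hs2, ← Finset.sum_sub_distrib]
  apply Finset.sum_congr rfl
  intro j hj
  simp only [map_sub, map_mul]
  ring

end Mlemmas

/-- Corollary 4.3: the `m = n+1` case gives the ballot numbers
`C_{n,k} = ((k+1)/(n+1)) C(2n-k,n)`.  Here `x = X 0`, `y = X 1`. -/
theorem stmt17 (M : ℕ → ℕ → MvPolynomial (Fin 2) ℚ)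
    (h00 : M 0 0 = 1) (htop : ∀ n k, n < k → M n k = 0)
    (h0 : ∀ n, M (n + 1) 0 = MvPolynomial.X 0 * M n 0)
    (h : ∀ n k, M (n + 1) (k + 1) = M n k + MvPolynomial.X 1 * M n (k + 1))
    (n : ℕ) :
    ∑ k ∈ Finset.range (n + 1),
        MvPolynomial.X 1 ^ (2 * k) * (M n k * M (n + 1) (k + 1) - M n (k + 1) * M (n + 1) k)
      = ∑ k ∈ Finset.range (n + 1),
          MvPolynomial.C (((k : ℚ) + 1) / ((n : ℚ) + 1) * ((2 * n - k).choose n))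
            * MvPolynomial.X 0 ^ k * MvPolynomial.X 1 ^ (2 * n - k) := by
  conv_lhs => rw [Finset.sum_range_succ']
  conv_rhs => rw [Finset.sum_range_succ]
  congr 1
  · -- the sums over range n
    have hterm : ∀ k ∈ range n,
        X 1 ^ (2 * (k + 1)) * (M n (k + 1) * M (n + 1) (k + 1 + 1)
          - M n (k + 1 + 1) * M (n + 1) (k + 1))
        = ∑ j ∈ range (n - k),
            C ((n.choose (k + 1) : ℚ) * ((n - 1 - j).choose k : ℚ)
              - (n.choose k : ℚ) * ((n - 1 - j).choose (k + 1) : ℚ))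
              * X 0 ^ j * X 1 ^ (2 * n - j) := by
      intro k hk
      rw [Dterm M h00 htop h0 h n k, texp M h00 htop h0 h n k (by simpa using hk)]
    rw [Finset.sum_congr rfl hterm]
    rw [Finset.sum_comm' (t' := range n) (s' := fun j => range (n - j))
      (by intro k j; constructor <;> (intro ⟨a, b⟩; constructor <;> simp_all <;> omega))]
    apply Finset.sum_congr rfl
    intro j hj
    have hj' : j < n := by simpa using hj
    rw [← Finset.sum_mul, ← Finset.sum_mul, ← map_sum, coeffsum n j hj']
  · -- the boundary terms
    simp only [Nat.mul_zero, pow_zero, one_mul, Nat.zero_add]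
    rw [D0 M h00 htop h0 h n]
    rw [show 2 * n - n = n from by omega, Nat.choose_self, Nat.cast_one, mul_one,
      div_self (by positivity : ((n : ℚ) + 1) ≠ 0), map_one, one_mul]
end
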